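/- arXiv:1811.04297 — 4 statements merged into one kernel-verified Lean document; each statement's English description precedes it below -/
import Mathlib

section
/- Let k ≥ 2 be an integer and G > 0. There is a constant C, depending only on k and G, such that the following holds. Let h be a multiplicative function with 0 ≤ h(d) ≤ d, let P be a finite set of primes, and let g₁,…,g_k be strongly additive functions with 0 ≤ g_j(p) ≤ G for all primes p and all 1 ≤ j ≤ k. Set 𝔎 = max_{1≤i,j≤k} |κ^P(g_i,g_j)| and assume 𝔎 ≥ 1. Then |Σ H(p₁···p_k)·g₁(p₁)···g_k(p_k)| ≤ C·𝔎^{k/2 − 1} if k is even, and |Σ H(p₁···p_k)·g₁(p₁)···g_k(p_k)| ≤ C·𝔎^{(k−1)/2} if k is odd, where in both cases the sum is over all k-tuples (p₁,…,p_k) of primes in P such that p₁···p_k is squarefull and #{p₁,…,p_k} < k/2. -/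
open Finset
open scoped Classical

noncomputable section

/-- A function `g : ℕ → ℝ` is strongly additive if `g (m * n) = g m + g n` whenever
`m` and `n` are coprime, and `g (p ^ α) = g p` for every prime `p` and `α ≥ 1`. -/
def StronglyAdditive (g : ℕ → ℝ) : Prop :=
  (∀ m n : ℕ, 0 < m → 0 < n → Nat.Coprime m n → g (m * n) = g m + g n) ∧
  ∀ p α : ℕ, p.Prime → 1 ≤ α → g (p ^ α) = g p

/-- The multiplicative function `H` with
`H(p^α) = (h(p)/p)(1 − h(p)/p)^α + (−h(p)/p)^α (1 − h(p)/p)`. -/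
def Hfun (h : ℕ → ℝ) (n : ℕ) : ℝ :=
  n.factorization.prod fun p α =>
    h p / p * (1 - h p / p) ^ α + (-(h p / p)) ^ α * (1 - h p / p)

/-- `κ^P(g₁, g₂) = ∑_{p ∈ P} g₁(p) g₂(p) (h(p)/p)(1 − h(p)/p)`. -/
def kappaP (h : ℕ → ℝ) (P : Finset ℕ) (g₁ g₂ : ℕ → ℝ) : ℝ :=
  ∑ p ∈ P, g₁ p * g₂ p * (h p / p) * (1 - h p / p)

/-- A positive integer is squarefull if `p² ∣ n` for every prime `p ∣ n`. -/
def Squarefull (n : ℕ) : Prop := ∀ p : ℕ, p.Prime → p ∣ n → p ^ 2 ∣ n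

/-- `τ : {1,…,k} → {1,…,l}` is 2-to-1 if every fiber has exactly two elements. -/
def TwoToOne {k l : ℕ} (τ : Fin k → Fin l) : Prop :=
  ∀ j : Fin l, (Finset.univ.filter fun i => τ i = j).card = 2

/-- For a 2-to-1 map `τ` and symmetric `z`, this equals `∏_j z (Υ₁ j) (Υ₂ j)`, where
`Υ₁ j, Υ₂ j` are the two preimages of `j` under `τ`: each factor averages `z` over the
two ordered pairs of distinct elements of the fiber of `j`. -/
def fiberProd {k l : ℕ} (z : Fin k → Fin k → ℝ) (τ : Fin k → Fin l) : ℝ :=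
  ∏ j : Fin l, (∑ i ∈ Finset.univ.filter (fun i => τ i = j),
    ∑ i' ∈ Finset.univ.filter (fun i' => τ i' = j ∧ i' ≠ i), z i i') / 2

lemma abs_H_factor (x : ℝ) (hx0 : 0 ≤ x) (hx1 : x ≤ 1) (α : ℕ) (hα : 2 ≤ α) :
    |x * (1 - x) ^ α + (-x) ^ α * (1 - x)| ≤ x * (1 - x) := by
  obtain ⟨β, rfl⟩ : ∃ β, α = β + 2 := ⟨α - 2, by omega⟩
  have hx1' : (0:ℝ) ≤ 1 - x := by linarith
  have h1 : (1 - x) ^ (β + 1) ≤ 1 - x :=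
    pow_le_of_le_one hx1' (by linarith) (by omega)
  have h2 : x ^ (β + 1) ≤ x := pow_le_of_le_one hx0 hx1 (by omega)
  have h3 : (0:ℝ) ≤ (1 - x) ^ (β + 1) := pow_nonneg hx1' _
  have h4 : (0:ℝ) ≤ x ^ (β + 1) := pow_nonneg hx0 _
  have habs : |x * (1 - x) ^ (β + 2) + (-x) ^ (β + 2) * (1 - x)|
      ≤ x * (1 - x) ^ (β + 2) + x ^ (β + 2) * (1 - x) := by
    refine (abs_add_le _ _).trans ?_
    rw [abs_mul, abs_mul, abs_pow, abs_pow, abs_neg, abs_of_nonneg hx0,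
      abs_of_nonneg hx1']
  refine habs.trans ?_
  have key : (1 - x) ^ (β + 1) + x ^ (β + 1) ≤ 1 := by linarith
  calc x * (1 - x) ^ (β + 2) + x ^ (β + 2) * (1 - x)
      = x * (1 - x) * ((1 - x) ^ (β + 1) + x ^ (β + 1)) := by ring
    _ ≤ x * (1 - x) * 1 :=
        mul_le_mul_of_nonneg_left key (mul_nonneg hx0 hx1')
    _ = x * (1 - x) := mul_one _

lemma fact_count {k : ℕ} (p : Fin k → ℕ) (hp : ∀ i, (p i).Prime) (q : ℕ) :
    (∏ i, p i).factorization q = (univ.filter fun i => p i = q).card := by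
  rw [Nat.factorization_prod (fun i _ => (hp i).pos.ne')]
  rw [Finset.sum_apply']
  have h1 : ∀ i : Fin k, (p i).factorization q = if p i = q then 1 else 0 := by
    intro i; rw [(hp i).factorization]; simp [Finsupp.single_apply]
  simp only [h1]
  simp [Finset.sum_boole]

lemma Hfun_eq {k : ℕ} (h : ℕ → ℝ) (p : Fin k → ℕ) (hp : ∀ i, (p i).Prime) :
    Hfun h (∏ i, p i) = ∏ q ∈ univ.image p,
      (h q / q * (1 - h q / q) ^ ((univ.filter fun i => p i = q).card)
        + (-(h q / q)) ^ ((univ.filter fun i => p i = q).card) * (1 - h q / q)) := by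
  unfold Hfun
  rw [Finsupp.prod_of_support_subset _ ?sub _ ?one]
  · exact Finset.prod_congr rfl fun q hq => by rw [fact_count p hp q]
  case sub =>
    intro q hq
    have hne := (Nat.support_factorization _) ▸ hq
    rw [Nat.mem_primeFactors] at hne
    obtain ⟨hqp, hdvd, -⟩ := hne
    obtain ⟨i, -, hi⟩ := hqp.prime.exists_mem_finset_dvd (by simpa using hdvd)
    have : p i = q := ((Nat.prime_dvd_prime_iff_eq hqp (hp i)).mp hi).symm
    exact Finset.mem_image.mpr ⟨i, Finset.mem_univ i, this⟩
  case one =>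
    intro q _
    simp only [pow_zero]
    ring

set_option maxHeartbeats 2000000 in
/-- **Lemma 5.3**: the sum over `k`-tuples of primes of `P` whose product is squarefull
with fewer than `k/2` distinct primes is `O(𝔎^{k/2 − 1})` for even `k` and
`O(𝔎^{(k−1)/2})` for odd `k`. -/
theorem unpaired_off_lemma (k : ℕ) (hk : 2 ≤ k) (G : ℝ) (hG : 0 < G) :
    ∃ C : ℝ, ∀ (h : ℕ → ℝ), h 1 = 1 →
      (∀ m n : ℕ, Nat.Coprime m n → h (m * n) = h m * h n) →
      (∀ d : ℕ, 0 < d → 0 ≤ h d) → (∀ d : ℕ, 0 < d → h d ≤ (d : ℝ)) →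
      ∀ (P : Finset ℕ), (∀ p ∈ P, p.Prime) →
      ∀ g : Fin k → ℕ → ℝ, (∀ j, StronglyAdditive (g j)) →
      (∀ j, ∀ p : ℕ, p.Prime → 0 ≤ g j p ∧ g j p ≤ G) →
      ∀ K : ℝ,
      (∀ i j : Fin k, |kappaP h P (g i) (g j)| ≤ K) →
      (∃ i j : Fin k, K = |kappaP h P (g i) (g j)|) →
      1 ≤ K →
      (Even k →
        |∑ p ∈ (Fintype.piFinset fun _ : Fin k => P).filter
            (fun p : Fin k → ℕ =>
              Squarefull (∏ i : Fin k, p i) ∧ 2 * (Finset.univ.image p).card < k),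
            Hfun h (∏ i : Fin k, p i) * ∏ i : Fin k, g i (p i)|
          ≤ C * K ^ ((k : ℝ) / 2 - 1)) ∧
      (Odd k →
        |∑ p ∈ (Fintype.piFinset fun _ : Fin k => P).filter
            (fun p : Fin k → ℕ =>
              Squarefull (∏ i : Fin k, p i) ∧ 2 * (Finset.univ.image p).card < k),
            Hfun h (∏ i : Fin k, p i) * ∏ i : Fin k, g i (p i)|
          ≤ C * K ^ (((k : ℝ) - 1) / 2)) := by
  classical
  refine ⟨(k:ℝ)^k * (max 1 G)^k, ?_⟩
  intro h h1 hmul hh0 hh1 P hP g hgadd hgG K hκ hκex hK1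
  set G' : ℝ := max 1 G with hG'def
  have hG'1 : (1:ℝ) ≤ G' := le_max_left _ _
  have hGG' : G ≤ G' := le_max_right _ _
  have hG'0 : (0:ℝ) ≤ G' := by linarith
  set T := (Fintype.piFinset fun _ : Fin k => P).filter
      (fun p : Fin k → ℕ =>
        Squarefull (∏ i : Fin k, p i) ∧ 2 * (Finset.univ.image p).card < k) with hTdef
  set e : ℕ := (k-1)/2 with hedef
  have hne : ∀ (p : Fin k → ℕ) (i : Fin k), (univ.filter fun i' => p i' = p i).Nonempty :=
    fun p i => ⟨i, mem_filter.mpr ⟨mem_univ i, rfl⟩⟩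
  set sig : (Fin k → ℕ) → Fin k → Fin k :=
    fun p i => (univ.filter fun i' => p i' = p i).min' (hne p i) with hsigdef
  have hsig_spec : ∀ (p : Fin k → ℕ) (i : Fin k), p (sig p i) = p i := fun p i =>
    (mem_filter.mp (Finset.min'_mem _ (hne p i))).2
  have hsig_congr : ∀ (p : Fin k → ℕ) (i i' : Fin k), p i = p i' → sig p i = sig p i' := by
    intro p i i' hpi
    have hset : (univ.filter fun j => p j = p i) = (univ.filter fun j => p j = p i') := by
      apply Finset.filter_congr; intro j _; simp [hpi]
    apply le_antisymm
    · exact Finset.min'_le _ _ (by rw [hset]; exact Finset.min'_mem _ _)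
    · exact Finset.min'_le _ _ (by rw [← hset]; exact Finset.min'_mem _ _)
  have hsig_idem : ∀ (p : Fin k → ℕ) (i : Fin k), sig p (sig p i) = sig p i := fun p i =>
    hsig_congr p _ i (hsig_spec p i)
  have hprime : ∀ p ∈ T, ∀ i, (p i).Prime := by
    intro p hpT i
    rw [hTdef, mem_filter] at hpT
    exact hP _ (Fintype.mem_piFinset.mp hpT.1 i)
  have hx01 : ∀ x : ℕ, x.Prime → 0 ≤ h x / x ∧ h x / x ≤ 1 := by
    intro x hx
    have hx0 : (0:ℝ) < x := by exact_mod_cast hx.pos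
    constructor
    · exact div_nonneg (hh0 x hx.pos) hx0.le
    · rw [div_le_one hx0]; exact hh1 x hx.pos
  have key : ∑ p ∈ T, |Hfun h (∏ i, p i) * ∏ i, g i (p i)|
      ≤ (k:ℝ)^k * G'^k * K ^ e := by
    rw [← Finset.sum_fiberwise T sig (fun p => |Hfun h (∏ i, p i) * ∏ i, g i (p i)|)]
    have hbound : ∀ σ : Fin k → Fin k,
        ∑ p ∈ T.filter (fun p => sig p = σ), |Hfun h (∏ i, p i) * ∏ i, g i (p i)|
        ≤ G'^k * K ^ e := by
      intro σ
      rcases Finset.eq_empty_or_nonempty (T.filter (fun p => sig p = σ)) with hA0 | hA0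
      · rw [hA0, Finset.sum_empty]
        have : (0:ℝ) < K := by linarith
        positivity
      obtain ⟨p₀, hp₀⟩ := hA0
      rw [Finset.mem_filter] at hp₀
      obtain ⟨hp₀T, hp₀σ⟩ := hp₀
      have hp₀T' := hp₀T
      rw [hTdef, Finset.mem_filter] at hp₀T'
      obtain ⟨hp₀pi, hp₀sq, hp₀card⟩ := hp₀T'
      set R := univ.filter (fun j : Fin k => σ j = j) with hRdef
      have hpfix : ∀ (p : Fin k → ℕ), sig p = σ → ∀ i, p (σ i) = p i := by
        intro p hps i; rw [← hps]; exact hsig_spec p i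
      have hσfix : ∀ i : Fin k, σ (σ i) = σ i := by
        intro i
        have := hsig_idem p₀ i
        rw [hp₀σ] at this
        exact this
      have hfibeq : ∀ (p : Fin k → ℕ), sig p = σ → ∀ j : Fin k, σ j = j →
          (univ.filter fun i => σ i = j) = (univ.filter fun i => p i = p j) := by
        intro p hps j hj
        ext i
        simp only [mem_filter, mem_univ, true_and]
        constructor
        · intro hij
          exact (hpfix p hps i).symm.trans (by rw [hij])
        · intro hpij
          have hcc := hsig_congr p i j hpij
          rw [hps] at hcc
          exact hcc.trans hj
      have hinj : ∀ (p : Fin k → ℕ), sig p = σ →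
          ∀ j ∈ R, ∀ j' ∈ R, p j = p j' → j = j' := by
        intro p hps j hj j' hj' hpp
        rw [hRdef, mem_filter] at hj hj'
        have hcc := hsig_congr p j j' hpp
        rw [hps] at hcc
        rw [← hj.2, ← hj'.2]; exact hcc
      have himg : ∀ (p : Fin k → ℕ), sig p = σ → univ.image p = R.image p := by
        intro p hps
        apply Finset.Subset.antisymm
        · intro q hq
          obtain ⟨i, -, rfl⟩ := mem_image.mp hq
          refine mem_image.mpr ⟨σ i, ?_, hpfix p hps i⟩
          rw [hRdef, mem_filter]
          exact ⟨mem_univ _, hσfix i⟩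
        · exact Finset.image_subset_image (Finset.subset_univ R)
      have hσj2 : ∀ j ∈ R, 2 ≤ (univ.filter fun i => σ i = j).card := by
        intro j hj
        rw [hRdef, mem_filter] at hj
        rw [hfibeq p₀ hp₀σ j hj.2]
        have hq : (p₀ j).Prime := hprime p₀ hp₀T j
        have hn0 : (∏ i, p₀ i) ≠ 0 :=
          (Finset.prod_pos fun i _ => (hprime p₀ hp₀T i).pos).ne'
        have hdvd : p₀ j ∣ ∏ i, p₀ i := Finset.dvd_prod_of_mem _ (mem_univ j)
        have hsq := hp₀sq _ hq hdvd
        have hle := (Nat.Prime.pow_dvd_iff_le_factorization hq hn0).mp hsq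
        rwa [fact_count p₀ (hprime p₀ hp₀T) (p₀ j)] at hle
      have hm : 2 * R.card < k := by
        have h1 : (univ.image p₀).card = R.card := by
          rw [himg p₀ hp₀σ]
          exact Finset.card_image_of_injOn fun j hj j' hj' hpp =>
            hinj p₀ hp₀σ j (Finset.mem_coe.mp hj) j' (Finset.mem_coe.mp hj') hpp
        rw [← h1]; exact hp₀card
      have hbne : ∀ j ∈ R, ((univ.filter fun i => σ i = j).erase j).Nonempty := by
        intro j hj
        have h2 := hσj2 j hj
        have hjmem : j ∈ univ.filter (fun i => σ i = j) :=
          mem_filter.mpr ⟨mem_univ _, (mem_filter.mp hj).2⟩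
        rw [← Finset.card_pos, Finset.card_erase_of_mem hjmem]
        omega
      set b : Fin k → Fin k := fun j =>
        if hb : ((univ.filter fun i => σ i = j).erase j).Nonempty then
          ((univ.filter fun i => σ i = j).erase j).min' hb else j with hbdef
      have hbmem : ∀ j ∈ R, b j ∈ (univ.filter fun i => σ i = j) ∧ b j ≠ j := by
        intro j hj
        have hb := hbne j hj
        have hmm := Finset.min'_mem _ hb
        rw [Finset.mem_erase] at hmm
        rw [hbdef]
        simp only [dif_pos hb]
        exact ⟨hmm.2, hmm.1⟩
      set F : Fin k → ℕ → ℝ := fun j x =>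
        g j x * g (b j) x * (h x / x) * (1 - h x / x) with hFdef
      have hF0 : ∀ (j : Fin k) (x : ℕ), x.Prime → 0 ≤ F j x := by
        intro j x hx
        obtain ⟨ha, hb'⟩ := hx01 x hx
        rw [hFdef]
        exact mul_nonneg (mul_nonneg (mul_nonneg (hgG j x hx).1
          (hgG (b j) x hx).1) ha) (by linarith)
      -- Step B: pointwise bound
      have hB : ∀ p ∈ T.filter (fun p' => sig p' = σ),
          |Hfun h (∏ i, p i) * ∏ i, g i (p i)| ≤ G'^k * ∏ j ∈ R, F j (p j) := by
        intro p hp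
        rw [mem_filter] at hp
        obtain ⟨hpT, hps⟩ := hp
        have hpr := hprime p hpT
        have hmaps : ∀ i : Fin k, i ∈ univ → σ i ∈ R := by
          intro i _
          rw [hRdef, mem_filter]
          exact ⟨mem_univ _, hσfix i⟩
        have hgfibsplit :
            (∏ i, g i (p i)) = ∏ j ∈ R, ∏ i ∈ univ.filter (fun i => σ i = j), g i (p i) :=
          (Finset.prod_fiberwise_of_maps_to hmaps _).symm
        have hgabs : |∏ i, g i (p i)| = ∏ i, g i (p i) :=
          abs_of_nonneg (Finset.prod_nonneg fun i _ => (hgG i _ (hpr i)).1)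
        rw [abs_mul, hgabs, Hfun_eq h p hpr, himg p hps,
          Finset.prod_image (fun j hj j' hj' => hinj p hps j hj j' hj'),
          Finset.abs_prod, hgfibsplit, ← Finset.prod_mul_distrib]
        have hstep : ∀ j ∈ R,
            |h (p j) / (p j) * (1 - h (p j) / (p j)) ^ ((univ.filter fun i => p i = p j).card)
              + (-(h (p j) / (p j))) ^ ((univ.filter fun i => p i = p j).card) * (1 - h (p j) / (p j))| *
              ∏ i ∈ univ.filter (fun i => σ i = j), g i (p i)
            ≤ F j (p j) * G' ^ ((univ.filter fun i => σ i = j).card - 2) := by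
          intro j hj
          have hjfix : σ j = j := (mem_filter.mp hj).2
          have hq : (p j).Prime := hpr j
          obtain ⟨hx0, hx1⟩ := hx01 (p j) hq
          have hα2 : 2 ≤ (univ.filter fun i => σ i = j).card := hσj2 j hj
          have hexp : (univ.filter fun i => p i = p j).card
              = (univ.filter fun i => σ i = j).card := by rw [← hfibeq p hps j hjfix]
          have habs := abs_H_factor (h (p j) / (p j)) hx0 hx1 _ hα2
          rw [hexp]
          -- g-fiber product bound
          have hpi : ∀ i ∈ univ.filter (fun i => σ i = j), g i (p i) = g i (p j) := by
            intro i hi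
            have hii : σ i = j := (mem_filter.mp hi).2
            rw [show p i = p j from (hpfix p hps i).symm.trans (by rw [hii])]
          have hj_in : j ∈ univ.filter (fun i => σ i = j) :=
            mem_filter.mpr ⟨mem_univ _, hjfix⟩
          obtain ⟨hbj_in, hbj_ne⟩ := hbmem j hj
          have hbj_in' : b j ∈ (univ.filter (fun i => σ i = j)).erase j :=
            Finset.mem_erase.mpr ⟨hbj_ne, hbj_in⟩
          have hrestcard : (((univ.filter (fun i => σ i = j)).erase j).erase (b j)).card
              = (univ.filter fun i => σ i = j).card - 2 := by
            rw [Finset.card_erase_of_mem hbj_in', Finset.card_erase_of_mem hj_in]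
            omega
          have hrest : ∏ i ∈ ((univ.filter (fun i => σ i = j)).erase j).erase (b j),
              g i (p j) ≤ G' ^ ((univ.filter fun i => σ i = j).card - 2) := by
            rw [← hrestcard]
            calc ∏ i ∈ ((univ.filter (fun i => σ i = j)).erase j).erase (b j), g i (p j)
                ≤ ∏ _i ∈ ((univ.filter (fun i => σ i = j)).erase j).erase (b j), G' :=
                  Finset.prod_le_prod (fun i _ => (hgG i _ hq).1)
                    (fun i _ => le_trans (hgG i _ hq).2 hGG')
              _ = G' ^ (((univ.filter (fun i => σ i = j)).erase j).erase (b j)).card :=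
                  Finset.prod_const G'
          have hgdec : ∏ i ∈ univ.filter (fun i => σ i = j), g i (p i)
              = g j (p j) * (g (b j) (p j) *
                ∏ i ∈ ((univ.filter (fun i => σ i = j)).erase j).erase (b j), g i (p j)) := by
            rw [Finset.prod_congr rfl hpi, ← Finset.mul_prod_erase _ _ hj_in,
              ← Finset.mul_prod_erase _ _ hbj_in']
          have hfib_le : ∏ i ∈ univ.filter (fun i => σ i = j), g i (p i)
              ≤ g j (p j) * (g (b j) (p j) * G' ^ ((univ.filter fun i => σ i = j).card - 2)) := by
            rw [hgdec]
            exact mul_le_mul_of_nonneg_left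
              (mul_le_mul_of_nonneg_left hrest (hgG (b j) _ hq).1) (hgG j _ hq).1
          have hfib_nonneg : 0 ≤ ∏ i ∈ univ.filter (fun i => σ i = j), g i (p i) :=
            Finset.prod_nonneg fun i _ => (hgG i _ (hpr i)).1
          calc |h (p j) / (p j) * (1 - h (p j) / (p j)) ^ ((univ.filter fun i => σ i = j).card)
              + (-(h (p j) / (p j))) ^ ((univ.filter fun i => σ i = j).card) * (1 - h (p j) / (p j))| *
                ∏ i ∈ univ.filter (fun i => σ i = j), g i (p i)
              ≤ (h (p j) / (p j) * (1 - h (p j) / (p j))) *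
                (g j (p j) * (g (b j) (p j) * G' ^ ((univ.filter fun i => σ i = j).card - 2))) :=
                mul_le_mul habs hfib_le hfib_nonneg (mul_nonneg hx0 (by linarith))
            _ = F j (p j) * G' ^ ((univ.filter fun i => σ i = j).card - 2) := by
                rw [hFdef]; ring
        have hsum2 : ∑ j ∈ R, ((univ.filter fun i => σ i = j).card - 2) ≤ k := by
          have h1 : ∑ j ∈ R, ((univ.filter fun i => σ i = j).card - 2)
              ≤ ∑ j ∈ R, (univ.filter fun i => σ i = j).card :=
            Finset.sum_le_sum fun j _ => Nat.sub_le _ _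
          have h2 : ∑ j ∈ R, (univ.filter fun i => σ i = j).card = k := by
            rw [← Finset.card_eq_sum_card_fiberwise
              (fun i (_ : i ∈ univ) => mem_filter.mpr ⟨mem_univ (σ i), hσfix i⟩)]
            simp
          omega
        calc ∏ j ∈ R, (|h (p j) / (p j) * (1 - h (p j) / (p j)) ^ ((univ.filter fun i => p i = p j).card)
              + (-(h (p j) / (p j))) ^ ((univ.filter fun i => p i = p j).card) * (1 - h (p j) / (p j))| *
              ∏ i ∈ univ.filter (fun i => σ i = j), g i (p i))
            ≤ ∏ j ∈ R, (F j (p j) * G' ^ ((univ.filter fun i => σ i = j).card - 2)) :=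
              Finset.prod_le_prod
                (fun j _ => mul_nonneg (abs_nonneg _)
                  (Finset.prod_nonneg fun i _ => (hgG i _ (hpr i)).1))
                hstep
          _ = (∏ j ∈ R, F j (p j)) * ∏ j ∈ R, G' ^ ((univ.filter fun i => σ i = j).card - 2) :=
              Finset.prod_mul_distrib
          _ = (∏ j ∈ R, F j (p j)) * G' ^ (∑ j ∈ R, ((univ.filter fun i => σ i = j).card - 2)) := by
              rw [← Finset.prod_pow_eq_pow_sum]
          _ ≤ (∏ j ∈ R, F j (p j)) * G' ^ k :=
              mul_le_mul_of_nonneg_left (pow_le_pow_right₀ hG'1 hsum2)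
                (Finset.prod_nonneg fun j _ => hF0 j _ (hpr j))
          _ = G'^k * ∏ j ∈ R, F j (p j) := mul_comm _ _
      -- sum bound
      have hC : ∑ p ∈ T.filter (fun p' => sig p' = σ), ∏ j ∈ R, F j (p j) ≤ K ^ R.card := by
        set A := T.filter (fun p' => sig p' = σ) with hAdef
        set φ : (Fin k → ℕ) → (Fin k → ℕ) := fun p j => if σ j = j then p j else 1 with hφdef
        have hφeq : ∀ p ∈ A, (∏ j ∈ R, F j (p j)) = ∏ j ∈ R, F j (φ p j) := by
          intro p hp
          refine Finset.prod_congr rfl fun j hj => ?_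
          have hjfix : σ j = j := (mem_filter.mp hj).2
          rw [hφdef]
          simp only [if_pos hjfix]
        have hφinj : ∀ p ∈ A, ∀ p' ∈ A, φ p = φ p' → p = p' := by
          intro p hp p' hp' hpp
          have hps : sig p = σ := (mem_filter.mp hp).2
          have hps' : sig p' = σ := (mem_filter.mp hp').2
          funext i
          have hc := congrFun hpp (σ i)
          rw [hφdef] at hc
          simp only [if_pos (hσfix i)] at hc
          calc p i = p (σ i) := (hpfix p hps i).symm
            _ = p' (σ i) := hc
            _ = p' i := hpfix p' hps' i
        have himage_sum : ∑ q ∈ A.image φ, (∏ j ∈ R, F j (q j))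
            = ∑ p ∈ A, ∏ j ∈ R, F j (φ p j) := Finset.sum_image hφinj
        rw [Finset.sum_congr rfl hφeq, ← himage_sum]
        set t' : Fin k → Finset ℕ := fun j => if σ j = j then P else {1} with ht'def
        have hsub : A.image φ ⊆ Fintype.piFinset t' := by
          intro q hq
          obtain ⟨p, hp, rfl⟩ := mem_image.mp hq
          rw [Fintype.mem_piFinset]
          intro j
          rw [hφdef, ht'def]
          by_cases hj : σ j = j
          · simp only [if_pos hj]
            have hppi : p ∈ Fintype.piFinset (fun _ : Fin k => P) := by
              have := (mem_filter.mp hp).1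
              rw [hTdef, mem_filter] at this
              exact this.1
            exact Fintype.mem_piFinset.mp hppi j
          · simp only [if_neg hj]
            exact Finset.mem_singleton_self 1
        have hnonneg : ∀ q ∈ Fintype.piFinset t', 0 ≤ ∏ j ∈ R, F j (q j) := by
          intro q hq
          refine Finset.prod_nonneg fun j hj => ?_
          have hjfix : σ j = j := (mem_filter.mp hj).2
          have hqj : q j ∈ P := by
            have := Fintype.mem_piFinset.mp hq j
            rw [ht'def] at this
            simpa only [if_pos hjfix] using this
          exact hF0 j _ (hP _ hqj)
        refine (Finset.sum_le_sum_of_subset_of_nonneg hsub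
          (fun q hq _ => hnonneg q hq)).trans ?_
        have hext : ∀ q : Fin k → ℕ,
            (∏ j ∈ R, F j (q j)) = ∏ j : Fin k, (if σ j = j then F j (q j) else 1) := by
          intro q
          rw [hRdef, Finset.prod_filter]
        calc ∑ q ∈ Fintype.piFinset t', ∏ j ∈ R, F j (q j)
            = ∑ q ∈ Fintype.piFinset t', ∏ j : Fin k, (if σ j = j then F j (q j) else 1) :=
              Finset.sum_congr rfl fun q _ => hext q
          _ = ∏ j : Fin k, ∑ x ∈ t' j, (if σ j = j then F j x else 1) :=
              (Finset.prod_univ_sum t' (fun j x => if σ j = j then F j x else 1)).symm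
          _ = ∏ j ∈ R, ∑ x ∈ P, F j x := by
              rw [hRdef, Finset.prod_filter]
              refine Finset.prod_congr rfl fun j _ => ?_
              by_cases hj : σ j = j
              · simp only [ht'def, if_pos hj]
              · simp only [ht'def, if_neg hj, Finset.sum_const, Finset.card_singleton,
                  one_smul]
          _ ≤ ∏ j ∈ R, K :=
              Finset.prod_le_prod
                (fun j _ => Finset.sum_nonneg fun x hx => hF0 j x (hP x hx))
                (fun j _ => by
                  have hkap : ∑ x ∈ P, F j x = kappaP h P (g j) (g (b j)) := by
                    rw [kappaP, hFdef]
                  rw [hkap]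
                  exact le_trans (le_abs_self _) (hκ j (b j)))
          _ = K ^ R.card := Finset.prod_const K
      have hRe : R.card ≤ e := by
        rw [hedef]; omega
      calc ∑ p ∈ T.filter (fun p => sig p = σ), |Hfun h (∏ i, p i) * ∏ i, g i (p i)|
          ≤ ∑ p ∈ T.filter (fun p => sig p = σ), G'^k * ∏ j ∈ R, F j (p j) :=
            Finset.sum_le_sum hB
        _ = G'^k * ∑ p ∈ T.filter (fun p => sig p = σ), ∏ j ∈ R, F j (p j) :=
            (Finset.mul_sum _ _ _).symm
        _ ≤ G'^k * K ^ R.card :=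
            mul_le_mul_of_nonneg_left hC (pow_nonneg hG'0 k)
        _ ≤ G'^k * K ^ e :=
            mul_le_mul_of_nonneg_left (pow_le_pow_right₀ (by linarith) hRe)
              (pow_nonneg hG'0 k)
    calc ∑ σ : Fin k → Fin k, ∑ p ∈ T.filter (fun p => sig p = σ),
          |Hfun h (∏ i, p i) * ∏ i, g i (p i)|
        ≤ ∑ _σ : Fin k → Fin k, G'^k * K ^ e := Finset.sum_le_sum fun σ _ => hbound σ
      _ = (Fintype.card (Fin k → Fin k) : ℝ) * (G'^k * K ^ e) := by
          rw [Finset.sum_const, card_univ, nsmul_eq_mul]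
      _ = (k:ℝ)^k * G'^k * K^e := by
          rw [Fintype.card_fun]
          push_cast [Fintype.card_fin]
          ring
  have hexp : ∀ r : ℝ, ((e : ℕ) : ℝ) = r → (k:ℝ)^k * G'^k * K ^ e ≤ (k:ℝ)^k * G'^k * K ^ r := by
    intro r hr
    rw [← Real.rpow_natCast K e, hr]
  constructor
  · intro hev
    obtain ⟨t, ht⟩ := hev
    have hcast : ((e : ℕ) : ℝ) = (k:ℝ)/2 - 1 := by
      have ht1 : 1 ≤ t := by omega
      have he : e = t - 1 := by omega
      rw [he, ht]
      push_cast [Nat.cast_sub ht1]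
      ring
    refine le_trans (Finset.abs_sum_le_sum_abs _ _) (le_trans key ?_)
    exact hexp _ hcast
  · intro hodd
    obtain ⟨t, ht⟩ := hodd
    have hcast : ((e : ℕ) : ℝ) = ((k:ℝ) - 1)/2 := by
      have he : e = t := by omega
      rw [he, ht]
      push_cast
      ring
    refine le_trans (Finset.abs_sum_le_sum_abs _ _) (le_trans key ?_)
    exact hexp _ hcast
end
end

section
/- Let (A, X, h, (E_d)) be a sieve setup. Then for every positive integer r, Σ_{a ∈ A} f_r(a) = H(r)·X + Σ_{s | r} μ²(s)·J(r, s)·E_s, where the second sum is over the positive divisors s of r and μ is the Möbius function (so only squarefree s contribute). -/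
open MeasureTheory Filter
open scoped Classical

noncomputable section

/-- A sieve setup: a finite multiset `A` of positive integers, an approximation `X > 0`
to `#A`, a multiplicative function `h` with `0 ≤ h(d) ≤ d`, and remainder terms `E d`
defined by `#A_d = (h(d)/d)·X + E_d`, where `A_d` is the sub-multiset of multiples of `d`. -/
structure SieveSetup where
  A : Multiset ℕ
  X : ℝ
  h : ℕ → ℝ
  E : ℕ → ℝ
  mem_pos : ∀ a ∈ A, 0 < a
  X_pos : 0 < X
  h_one : h 1 = 1
  h_mult : ∀ m n : ℕ, Nat.Coprime m n → h (m * n) = h m * h n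
  h_nonneg : ∀ d : ℕ, 0 < d → 0 ≤ h d
  h_le : ∀ d : ℕ, 0 < d → h d ≤ (d : ℝ)
  count_eq : ∀ d : ℕ, 0 < d →
    ((A.filter (fun a => d ∣ a)).card : ℝ) = h d / d * X + E d

/-- `μ^P(g) = ∑_{p ∈ P} g(p) h(p)/p`. -/
def muP (h : ℕ → ℝ) (P : Finset ℕ) (g : ℕ → ℝ) : ℝ := ∑ p ∈ P, g p * (h p / p)

/-- `μ^P(1) = ∑_{p ∈ P} h(p)/p`. -/
def muP1 (h : ℕ → ℝ) (P : Finset ℕ) : ℝ := ∑ p ∈ P, h p / p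

/-- `g^P(a) = ∑_{p ∈ P, p ∣ a} g(p)`. -/
def gP (P : Finset ℕ) (g : ℕ → ℝ) (a : ℕ) : ℝ := ∑ p ∈ P.filter (· ∣ a), g p

/-- `f_r(a)`: the completely multiplicative function of `r` with
`f_p(a) = 1 − h(p)/p` if `p ∣ a` and `f_p(a) = −h(p)/p` if `p ∤ a`. -/
def ffun (h : ℕ → ℝ) (r a : ℕ) : ℝ :=
  r.factorization.prod fun p α => (if p ∣ a then 1 - h p / p else -(h p / p)) ^ α

/-- `F_g^P(a) = ∑_{p ∈ P} g(p) f_p(a)`. -/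
def FP (h : ℕ → ℝ) (P : Finset ℕ) (g : ℕ → ℝ) (a : ℕ) : ℝ := ∑ p ∈ P, g p * ffun h p a

/-- `D_k(P)`: the squarefree integers (including 1) that are products of at most `k`
distinct primes of `P`. -/
def Dk (P : Finset ℕ) (k : ℕ) : Finset ℕ :=
  (P.powerset.filter fun S => S.card ≤ k).image fun S => ∏ p ∈ S, p

/-- The multiplicative function `J(·, s)` with `J(p^α, s) = (1 − h(p)/p)^α − (−h(p)/p)^α`
if `p ∣ s`, and `J(p^α, s) = (−h(p)/p)^α` if `p ∤ s`. -/
def Jfun (h : ℕ → ℝ) (r s : ℕ) : ℝ :=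
  r.factorization.prod fun p α =>
    if p ∣ s then (1 - h p / p) ^ α - (-(h p / p)) ^ α else (-(h p / p)) ^ α

/-- `C_m = m! / (2^{m/2} (m/2)!)`, the `m`-th moment of the standard normal distribution
for even `m`. -/
def Cm (m : ℕ) : ℝ := (Nat.factorial m : ℝ) / (2 ^ (m / 2) * (Nat.factorial (m / 2) : ℝ))

/-- `A_Q(P) = Q(μ^P(g₁), …, μ^P(g_ℓ))`. -/
def AQP {ℓ : ℕ} (h : ℕ → ℝ) (P : Finset ℕ) (Q : MvPolynomial (Fin ℓ) ℝ)
    (g : Fin ℓ → ℕ → ℝ) : ℝ :=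
  MvPolynomial.eval (fun i => muP h P (g i)) Q

/-- `B_Q(P)² = ∑_{i,j} (∂Q/∂T_i)(μ^P(g)) (∂Q/∂T_j)(μ^P(g)) κ^P(g_i, g_j)`. -/
def BQP2 {ℓ : ℕ} (h : ℕ → ℝ) (P : Finset ℕ) (Q : MvPolynomial (Fin ℓ) ℝ)
    (g : Fin ℓ → ℕ → ℝ) : ℝ :=
  ∑ i : Fin ℓ, ∑ j : Fin ℓ,
    MvPolynomial.eval (fun i' => muP h P (g i')) (MvPolynomial.pderiv i Q) *
    MvPolynomial.eval (fun i' => muP h P (g i')) (MvPolynomial.pderiv j Q) *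
    kappaP h P (g i) (g j)

/-- `B_Q(P)`, the square root of `B_Q(P)²`. -/
def BQP {ℓ : ℕ} (h : ℕ → ℝ) (P : Finset ℕ) (Q : MvPolynomial (Fin ℓ) ℝ)
    (g : Fin ℓ → ℕ → ℝ) : ℝ :=
  Real.sqrt (BQP2 h P Q g)

/-- The `m`-th moment `M_m = ∑_{a ∈ A} (Q(g₁^P(a), …, g_ℓ^P(a)) − A_Q(P))^m`. -/
def Mm {ℓ : ℕ} (S : SieveSetup) (P : Finset ℕ) (Q : MvPolynomial (Fin ℓ) ℝ)
    (g : Fin ℓ → ℕ → ℝ) (m : ℕ) : ℝ :=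
  (S.A.map fun a =>
    (MvPolynomial.eval (fun i => gP P (g i) a) Q - AQP S.h P Q g) ^ m).sum


open Finset in
private lemma aux_sum_map_sum {β : Type*} (A : Multiset ℕ) (T : Finset β) (F : β → ℕ → ℝ) :
    (A.map fun a => ∑ t ∈ T, F t a).sum = ∑ t ∈ T, (A.map (F t)).sum := by
  induction A using Multiset.induction with
  | empty => simp
  | cons a A ih => simp [ih, Finset.sum_add_distrib]

private lemma aux_sum_map_ind (A : Multiset ℕ) (s : ℕ) :
    (A.map fun a => if s ∣ a then (1:ℝ) else 0).sum
      = ((A.filter fun a => s ∣ a).card : ℝ) := by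
  induction A using Multiset.induction with
  | empty => simp
  | cons a A ih => by_cases h : s ∣ a <;> simp [Multiset.filter_cons, h, ih] <;> ring

private lemma aux_prod_ind (a : ℕ) (t : Finset ℕ) (ht : ∀ p ∈ t, p.Prime) :
    (∏ p ∈ t, if p ∣ a then (1:ℝ) else 0) = if (∏ p ∈ t, p) ∣ a then 1 else 0 := by
  by_cases hd : (∏ p ∈ t, p) ∣ a
  · rw [if_pos hd]
    exact Finset.prod_eq_one fun p hp => if_pos ((Finset.dvd_prod_of_mem _ hp).trans hd)
  · rw [if_neg hd]
    have : ∃ p ∈ t, ¬ p ∣ a := by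
      by_contra hc
      push_neg at hc
      exact hd (Finset.prod_primes_dvd a (fun p hp => (ht p hp).prime) hc)
    obtain ⟨p, hp, hpa⟩ := this
    exact Finset.prod_eq_zero hp (if_neg hpa)

private lemma aux_dvd_prod_iff_mem {p : ℕ} (hp : p.Prime) (t : Finset ℕ)
    (ht : ∀ q ∈ t, q.Prime) : p ∣ (∏ q ∈ t, q) ↔ p ∈ t := by
  constructor
  · intro hd
    obtain ⟨q, hq, hpq⟩ := (hp.prime.dvd_finset_prod_iff _).mp hd
    rwa [(Nat.prime_dvd_prime_iff_eq hp (ht q hq)).mp hpq]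
  · exact fun hm => Finset.dvd_prod_of_mem _ hm

private lemma aux_Jfun_prod (h : ℕ → ℝ) (r : ℕ) (t : Finset ℕ) (htP : t ⊆ r.primeFactors) :
    Jfun h r (∏ p ∈ t, p)
      = (∏ p ∈ t, ((1 - h p / p) ^ (r.factorization p) - (-(h p / p)) ^ (r.factorization p)))
        * ∏ p ∈ r.primeFactors \ t, (-(h p / p)) ^ (r.factorization p) := by
  have ht : ∀ q ∈ t, q.Prime := fun q hq => Nat.prime_of_mem_primeFactors (htP hq)
  rw [Jfun, Finsupp.prod, Nat.support_factorization,
    ← Finset.prod_filter_mul_prod_filter_not r.primeFactors (· ∈ t)]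
  congr 1
  · rw [Finset.filter_mem_eq_inter, Finset.inter_eq_right.mpr htP]
    exact Finset.prod_congr rfl fun p hp =>
      if_pos ((aux_dvd_prod_iff_mem (ht p hp) t ht).mpr hp)
  · rw [← Finset.sdiff_eq_filter]
    refine Finset.prod_congr rfl fun p hp => ?_
    rw [Finset.mem_sdiff] at hp
    exact if_neg (fun hd =>
      hp.2 ((aux_dvd_prod_iff_mem (Nat.prime_of_mem_primeFactors hp.1) t ht).mp hd))

private lemma aux_ffun_eq_sum (h : ℕ → ℝ) (r a : ℕ) :
    ffun h r a = ∑ t ∈ r.primeFactors.powerset,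
      Jfun h r (∏ p ∈ t, p) * (if (∏ p ∈ t, p) ∣ a then 1 else 0) := by
  rw [ffun, Finsupp.prod, Nat.support_factorization]
  have step : ∀ p ∈ r.primeFactors,
      (if p ∣ a then 1 - h p / p else -(h p / p)) ^ (r.factorization p)
      = (if p ∣ a then (1:ℝ) else 0) *
          ((1 - h p / p) ^ (r.factorization p) - (-(h p / p)) ^ (r.factorization p))
        + (-(h p / p)) ^ (r.factorization p) := by
    intro p _
    by_cases hd : p ∣ a <;> simp [hd] <;> ring
  rw [Finset.prod_congr rfl step, Finset.prod_add]
  refine Finset.sum_congr rfl fun t htm => ?_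
  rw [Finset.mem_powerset] at htm
  rw [Finset.prod_mul_distrib, aux_Jfun_prod h r t htm,
    aux_prod_ind a t (fun p hp => Nat.prime_of_mem_primeFactors (htm hp))]
  ring

private lemma aux_h_prod_primes (h : ℕ → ℝ) (h1 : h 1 = 1)
    (hm : ∀ m n : ℕ, Nat.Coprime m n → h (m * n) = h m * h n)
    (t : Finset ℕ) (ht : ∀ p ∈ t, p.Prime) :
    h (∏ p ∈ t, p) = ∏ p ∈ t, h p := by
  induction t using Finset.induction with
  | empty => simpa using h1
  | @insert a s ha ih =>
    have hap : a.Prime := ht a (Finset.mem_insert_self a s)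
    have hsp : ∀ p ∈ s, p.Prime := fun p hp => ht p (Finset.mem_insert_of_mem hp)
    have hcop : Nat.Coprime a (∏ p ∈ s, p) := by
      apply Nat.Coprime.prod_right
      intro p hp
      exact (Nat.coprime_primes hap (hsp p hp)).mpr (fun he => ha (he ▸ hp))
    rw [Finset.prod_insert ha, Finset.prod_insert ha, hm a _ hcop, ih hsp]

private lemma aux_hfun_eq_sum (h : ℕ → ℝ) (r : ℕ) (h1 : h 1 = 1)
    (hm : ∀ m n : ℕ, Nat.Coprime m n → h (m * n) = h m * h n) :
    Hfun h r = ∑ t ∈ r.primeFactors.powerset,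
      Jfun h r (∏ p ∈ t, p) * (h (∏ p ∈ t, p) / (∏ p ∈ t, p)) := by
  rw [Hfun, Finsupp.prod, Nat.support_factorization]
  have step : ∀ p ∈ r.primeFactors,
      h p / p * (1 - h p / p) ^ (r.factorization p)
        + (-(h p / p)) ^ (r.factorization p) * (1 - h p / p)
      = (h p / p) *
          ((1 - h p / p) ^ (r.factorization p) - (-(h p / p)) ^ (r.factorization p))
        + (-(h p / p)) ^ (r.factorization p) := by
    intro p hp
    have hp1 : r.factorization p ≠ 0 := by
      rw [← Finsupp.mem_support_iff, Nat.support_factorization]; exact hp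
    obtain ⟨β, hβ⟩ := Nat.exists_eq_add_of_le (Nat.one_le_iff_ne_zero.mpr hp1)
    rw [hβ]
    ring
  rw [Finset.prod_congr rfl step, Finset.prod_add]
  refine Finset.sum_congr rfl fun t htm => ?_
  rw [Finset.mem_powerset] at htm
  have ht : ∀ p ∈ t, p.Prime := fun p hp => Nat.prime_of_mem_primeFactors (htm hp)
  rw [Finset.prod_mul_distrib, aux_h_prod_primes h h1 hm t ht,
    aux_Jfun_prod h r t htm, Nat.cast_prod, ← Finset.prod_div_distrib]
  ring

private lemma aux_sum_div_pow (r : ℕ) (hr : 0 < r) (f : ℕ → ℝ) :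
    ∑ s ∈ r.divisors, ((ArithmeticFunction.moebius s : ℤ) : ℝ) ^ 2 * f s
      = ∑ t ∈ r.primeFactors.powerset, f (∏ p ∈ t, p) := by
  have key : ∀ s : ℕ, ((ArithmeticFunction.moebius s : ℤ) : ℝ) ^ 2 * f s
      = if Squarefree s then f s else 0 := by
    intro s
    by_cases hs : Squarefree s
    · rw [if_pos hs, ArithmeticFunction.moebius_apply_of_squarefree hs]
      push_cast
      rw [← pow_mul, mul_comm (ArithmeticFunction.cardFactors s) 2, pow_mul,
        neg_one_sq, one_pow, one_mul]
    · rw [if_neg hs, ArithmeticFunction.moebius_eq_zero_of_not_squarefree hs]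
      push_cast
      ring
  rw [Finset.sum_congr rfl fun s _ => key s, ← Finset.sum_filter,
    Nat.sum_divisors_filter_squarefree hr.ne']
  have hfin : (UniqueFactorizationMonoid.normalizedFactors r).toFinset = r.primeFactors := by
    rw [Nat.factors_eq]
    simp
  rw [hfin]
  refine Finset.sum_congr rfl fun t _ => ?_
  congr 1
  rw [Finset.prod_eq_multiset_prod, Multiset.map_id']

/-- **Lemma 5.4**: `∑_{a ∈ A} f_r(a) = H(r)·X + ∑_{s ∣ r} μ²(s) J(r, s) E_s`. -/
theorem fra_calculation (S : SieveSetup) (r : ℕ) (hr : 0 < r) :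
    (S.A.map fun a => ffun S.h r a).sum
    = Hfun S.h r * S.X +
      ∑ s ∈ r.divisors, (ArithmeticFunction.moebius s : ℝ) ^ 2 * Jfun S.h r s * S.E s := by
  have hmap : (S.A.map fun a => ffun S.h r a)
      = S.A.map fun a => ∑ t ∈ r.primeFactors.powerset,
          Jfun S.h r (∏ p ∈ t, p) * (if (∏ p ∈ t, p) ∣ a then 1 else 0) :=
    Multiset.map_congr rfl fun a _ => aux_ffun_eq_sum S.h r a
  rw [hmap, aux_sum_map_sum]
  have hterm : ∀ t ∈ r.primeFactors.powerset,
      (S.A.map fun a =>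
          Jfun S.h r (∏ p ∈ t, p) * (if (∏ p ∈ t, p) ∣ a then 1 else 0)).sum
      = Jfun S.h r (∏ p ∈ t, p) *
          (S.h (∏ p ∈ t, p) / (∏ p ∈ t, p) * S.X + S.E (∏ p ∈ t, p)) := by
    intro t htm
    rw [Finset.mem_powerset] at htm
    have hpos : 0 < ∏ p ∈ t, p := Finset.prod_pos fun p hp =>
      (Nat.prime_of_mem_primeFactors (htm hp)).pos
    rw [Multiset.sum_map_mul_left, aux_sum_map_ind, S.count_eq _ hpos]
  rw [Finset.sum_congr rfl hterm]
  have hsplit : ∀ t ∈ r.primeFactors.powerset,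
      Jfun S.h r (∏ p ∈ t, p) *
          (S.h (∏ p ∈ t, p) / (∏ p ∈ t, p) * S.X + S.E (∏ p ∈ t, p))
      = Jfun S.h r (∏ p ∈ t, p) * (S.h (∏ p ∈ t, p) / (∏ p ∈ t, p)) * S.X
        + Jfun S.h r (∏ p ∈ t, p) * S.E (∏ p ∈ t, p) := by
    intro t _
    ring
  rw [Finset.sum_congr rfl hsplit, Finset.sum_add_distrib, ← Finset.sum_mul,
    ← aux_hfun_eq_sum S.h r S.h_one S.h_mult]
  congr 1
  rw [Finset.sum_congr rfl fun s _ =>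
    (mul_assoc (((ArithmeticFunction.moebius s : ℤ) : ℝ) ^ 2) (Jfun S.h r s) (S.E s)),
    aux_sum_div_pow r hr (fun s => Jfun S.h r s * S.E s)]
end
end

section
/- Let k be a positive integer and G > 0. There is a constant C, depending only on k and G, such that the following holds. Let (A, X, h, (E_d)) be a sieve setup, let P be a finite set of primes with μ^P(1) = Σ_{p ∈ P} h(p)/p ≥ 1, and let g₁,…,g_k be strongly additive functions with 0 ≤ g_j(p) ≤ G for all primes p and all 1 ≤ j ≤ k. Then |Σ_{p₁,…,p_k ∈ P} g₁(p₁)···g_k(p_k) · Σ_{s | p₁···p_k} μ²(s)·J(p₁···p_k, s)·E_s| ≤ C·μ^P(1)^k · Σ_{d ∈ D_k(P)} |E_d|, where the inner sum is over the positive divisors s of p₁···p_k and μ is the Möbius function. -/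
open MeasureTheory Filter
open scoped Classical

noncomputable section

def Phi (c : ℕ → ℝ) (n : ℕ) : ℝ := n.factorization.prod fun p α => c p ^ α

lemma Phi_mul (c : ℕ → ℝ) {m n : ℕ} (hm : m ≠ 0) (hn : n ≠ 0) :
    Phi c (m * n) = Phi c m * Phi c n := by
  unfold Phi
  rw [Nat.factorization_mul hm hn]
  exact Finsupp.prod_add_index' (fun a => pow_zero _) (fun a b₁ b₂ => pow_add _ _ _)

lemma Phi_prime (c : ℕ → ℝ) {p : ℕ} (hp : p.Prime) : Phi c p = c p := by
  unfold Phi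
  rw [hp.factorization]
  simp [Finsupp.prod_single_index]

lemma Phi_prod (c : ℕ → ℝ) {ι : Type*} (s : Finset ι) (p : ι → ℕ)
    (hp : ∀ i ∈ s, (p i).Prime) : Phi c (∏ i ∈ s, p i) = ∏ i ∈ s, c (p i) := by
  classical
  induction s using Finset.induction with
  | empty => simp [Phi]
  | @insert a s ha ih =>
    have h1 : p a ≠ 0 := (hp a (Finset.mem_insert_self a s)).pos.ne'
    have h2 : (∏ i ∈ s, p i) ≠ 0 :=
      Finset.prod_ne_zero_iff.mpr fun i hi => (hp i (Finset.mem_insert_of_mem hi)).pos.ne'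
    rw [Finset.prod_insert ha, Finset.prod_insert ha, Phi_mul c h1 h2,
      Phi_prime c (hp a (Finset.mem_insert_self a s)),
      ih (fun i hi => hp i (Finset.mem_insert_of_mem hi))]

lemma abs_Jfun_le (h : ℕ → ℝ) (hh0 : ∀ p : ℕ, p.Prime → 0 ≤ h p)
    (hh1 : ∀ p : ℕ, p.Prime → h p ≤ p) (r s : ℕ) :
    |Jfun h r s| ≤ Phi (fun p => if p ∣ s then 2 else h p / p) r := by
  unfold Jfun Phi Finsupp.prod
  rw [Finset.abs_prod]
  refine Finset.prod_le_prod (fun p _ => abs_nonneg _) ?_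
  intro p hp
  have hpp : p.Prime := Nat.prime_of_mem_primeFactors (by rwa [Nat.support_factorization] at hp)
  have hα : r.factorization p ≠ 0 := Finsupp.mem_support_iff.mp hp
  have hp0 : (0:ℝ) < p := by exact_mod_cast hpp.pos
  set x := h p / p with hxdef
  have hx0 : 0 ≤ x := div_nonneg (hh0 p hpp) hp0.le
  have hx1 : x ≤ 1 := (div_le_one hp0).mpr (hh1 p hpp)
  by_cases hd : p ∣ s
  · simp only [hd, if_true]
    calc |(1 - x) ^ r.factorization p - (-x) ^ r.factorization p|
        ≤ |(1 - x) ^ r.factorization p| + |(-x) ^ r.factorization p| := abs_sub _ _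
      _ ≤ 1 + 1 := by
          rw [abs_pow, abs_pow, abs_neg, abs_of_nonneg hx0,
            abs_of_nonneg (by linarith : (0:ℝ) ≤ 1 - x)]
          gcongr <;> [skip; exact pow_le_one₀ hx0 hx1] <;> exact pow_le_one₀ (by linarith) (by linarith)
      _ ≤ 2 ^ r.factorization p := by
          have := le_self_pow₀ (by norm_num : (1:ℝ) ≤ 2) hα
          linarith
  · simp only [hd, if_false]
    rw [abs_pow, abs_neg, abs_of_nonneg hx0]

lemma inner_bound {k : ℕ} (h E : ℕ → ℝ)
    (hh0 : ∀ p : ℕ, p.Prime → 0 ≤ h p) (hh1 : ∀ p : ℕ, p.Prime → h p ≤ p)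
    (p : Fin k → ℕ) (hp : ∀ i, (p i).Prime) :
    |∑ s ∈ (∏ i, p i).divisors,
        (ArithmeticFunction.moebius s : ℝ) ^ 2 * Jfun h (∏ i, p i) s * E s|
    ≤ ∑ I : Finset (Fin k),
        2 ^ k * (∏ i ∈ Finset.univ.filter (· ∉ I), h (p i) / p i) *
          |E (∏ q ∈ I.image p, q)| := by
  classical
  set r := ∏ i, p i with hr
  have hr0 : r ≠ 0 := Finset.prod_ne_zero_iff.mpr fun i _ => (hp i).pos.ne'
  set ι : ℕ → Finset (Fin k) := fun s => Finset.univ.filter (fun i => p i ∣ s) with hι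
  set F : Finset (Fin k) → ℝ := fun I =>
    2 ^ k * (∏ i ∈ Finset.univ.filter (· ∉ I), h (p i) / p i) * |E (∏ q ∈ I.image p, q)|
    with hF
  have hw0 : ∀ (I : Finset (Fin k)), 0 ≤ ∏ i ∈ Finset.univ.filter (· ∉ I), h (p i) / p i :=
    fun I => Finset.prod_nonneg fun i _ =>
      div_nonneg (hh0 _ (hp i)) (Nat.cast_nonneg _)
  have hF0 : ∀ I, 0 ≤ F I := fun I =>
    mul_nonneg (mul_nonneg (by positivity) (hw0 I)) (abs_nonneg _)
  -- recovery of squarefree divisors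
  have key : ∀ s : ℕ, Squarefree s → s ∣ r → s = ∏ q ∈ (ι s).image p, q := by
    intro s hsf hsd
    have hs0 : s ≠ 0 := hsf.ne_zero
    have himg : s.primeFactors = (ι s).image p := by
      ext q
      simp only [Nat.mem_primeFactors, Finset.mem_image, hι, Finset.mem_filter,
        Finset.mem_univ, true_and]
      constructor
      · rintro ⟨hq, hqs, -⟩
        obtain ⟨i, -, hqi⟩ := hq.prime.exists_mem_finset_dvd (hqs.trans hsd)
        have hqe : q = p i := (Nat.prime_dvd_prime_iff_eq hq (hp i)).mp hqi
        exact ⟨i, by rw [← hqe]; exact hqs, hqe.symm⟩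
      · rintro ⟨i, hdvd, rfl⟩
        exact ⟨hp i, hdvd, hs0⟩
    rw [← himg, Nat.prod_primeFactors_of_squarefree hsf]
  calc |∑ s ∈ r.divisors, (ArithmeticFunction.moebius s : ℝ) ^ 2 * Jfun h r s * E s|
      ≤ ∑ s ∈ r.divisors, |(ArithmeticFunction.moebius s : ℝ) ^ 2 * Jfun h r s * E s| :=
        Finset.abs_sum_le_sum_abs _ _
    _ = ∑ s ∈ r.divisors.filter Squarefree, |Jfun h r s| * |E s| := by
        rw [← Finset.sum_filter_add_sum_filter_not r.divisors Squarefree]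
        have h2 : ∑ s ∈ r.divisors.filter (fun s => ¬ Squarefree s),
            |(ArithmeticFunction.moebius s : ℝ) ^ 2 * Jfun h r s * E s| = 0 := by
          refine Finset.sum_eq_zero fun s hs => ?_
          rw [ArithmeticFunction.moebius_eq_zero_of_not_squarefree
            (Finset.mem_filter.mp hs).2]
          simp
        rw [h2, add_zero]
        refine Finset.sum_congr rfl fun s hs => ?_
        have hsf : Squarefree s := (Finset.mem_filter.mp hs).2
        rw [abs_mul, abs_mul, ArithmeticFunction.moebius_apply_of_squarefree hsf]
        push_cast
        rw [abs_pow, abs_pow, abs_neg, abs_one, one_pow, one_pow, one_mul]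
    _ ≤ ∑ s ∈ r.divisors.filter Squarefree, F (ι s) := by
        refine Finset.sum_le_sum fun s hs => ?_
        have hsf : Squarefree s := (Finset.mem_filter.mp hs).2
        have hsd : s ∣ r := (Nat.mem_divisors.mp (Finset.mem_filter.mp hs).1).1
        have hEeq : E s = E (∏ q ∈ (ι s).image p, q) := by rw [← key s hsf hsd]
        have hJ : |Jfun h r s| ≤
            2 ^ k * ∏ i ∈ Finset.univ.filter (· ∉ ι s), h (p i) / p i := by
          refine le_trans (abs_Jfun_le h hh0 hh1 r s) ?_
          rw [hr, Phi_prod _ _ _ (fun i _ => hp i)]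
          rw [← Finset.prod_filter_mul_prod_filter_not Finset.univ (fun i => p i ∣ s)]
          have e1 : ∏ i ∈ Finset.univ.filter (fun i => p i ∣ s),
              (if p i ∣ s then (2:ℝ) else h (p i) / p i) =
              2 ^ (Finset.univ.filter (fun i => p i ∣ s)).card := by
            rw [Finset.prod_congr rfl (fun i hi => if_pos (Finset.mem_filter.mp hi).2),
              Finset.prod_const]
          have e2 : ∏ i ∈ Finset.univ.filter (fun i => ¬ p i ∣ s),
              (if p i ∣ s then (2:ℝ) else h (p i) / p i) =
              ∏ i ∈ Finset.univ.filter (· ∉ ι s), h (p i) / p i := by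
            refine Finset.prod_congr ?_ (fun i hi => ?_)
            · ext i; simp [hι]
            · simp only [Finset.mem_filter, hι, Finset.mem_univ, true_and] at hi
              rw [if_neg (by simpa using hi)]
          rw [e1, e2]
          refine mul_le_mul_of_nonneg_right ?_ (hw0 (ι s))
          exact pow_le_pow_right₀ (by norm_num) (le_trans (Finset.card_filter_le _ _)
            (by simp))
        calc |Jfun h r s| * |E s|
            ≤ (2 ^ k * ∏ i ∈ Finset.univ.filter (· ∉ ι s), h (p i) / p i) * |E s| :=
              mul_le_mul_of_nonneg_right hJ (abs_nonneg _)
          _ = F (ι s) := by rw [hF]; rw [hEeq]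
    _ = ∑ I ∈ (r.divisors.filter Squarefree).image ι, F I := by
        refine (Finset.sum_image fun s hs t ht hst => ?_).symm
        have hs' := Finset.mem_filter.mp hs
        have ht' := Finset.mem_filter.mp ht
        rw [key s hs'.2 (Nat.mem_divisors.mp hs'.1).1,
          key t ht'.2 (Nat.mem_divisors.mp ht'.1).1, hst]
    _ ≤ ∑ I : Finset (Fin k), F I :=
        Finset.sum_le_sum_of_subset_of_nonneg (Finset.subset_univ _)
          (fun I _ _ => hF0 I)

lemma sum_fiber_bound {k : ℕ} (hk : 0 < k) (h E : ℕ → ℝ)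
    (hh0 : ∀ p : ℕ, p.Prime → 0 ≤ h p)
    (P : Finset ℕ) (hP : ∀ p ∈ P, p.Prime) (hmu : 1 ≤ muP1 h P)
    (I : Finset (Fin k)) :
    ∑ p ∈ Fintype.piFinset (fun _ : Fin k => P),
      (∏ i ∈ Finset.univ.filter (· ∉ I), h (p i) / p i) * |E (∏ q ∈ I.image p, q)|
    ≤ (k * muP1 h P) ^ k * ∑ d ∈ Dk P k, |E d| := by
  classical
  have hmu0 : (0:ℝ) ≤ muP1 h P := zero_le_one.trans hmu
  set dI : (Fin k → ℕ) → ℕ := fun p => ∏ q ∈ I.image p, q with hdI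
  have hmaps : ∀ p ∈ Fintype.piFinset (fun _ : Fin k => P), dI p ∈ Dk P k := by
    intro p hpmem
    have hpm : ∀ i, p i ∈ P := fun i => (Fintype.mem_piFinset.mp hpmem) i
    refine Finset.mem_image.mpr ⟨I.image p, Finset.mem_filter.mpr ⟨?_, ?_⟩, rfl⟩
    · exact Finset.mem_powerset.mpr fun q hq => by
        obtain ⟨i, -, rfl⟩ := Finset.mem_image.mp hq; exact hpm i
    · exact le_trans (Finset.card_image_le) (le_trans (Finset.card_le_univ I)
        (by simp))
  rw [← Finset.sum_fiberwise_of_maps_to hmaps]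
  refine le_trans (Finset.sum_le_sum (fun d hd => ?_)) (by rw [← Finset.mul_sum])
  -- goal: fiber sum over d ≤ (k μ1)^k * |E d|
  obtain ⟨Sd, hSd, rfl⟩ := Finset.mem_image.mp hd
  have hSd' := Finset.mem_filter.mp hSd
  have hSdP : Sd ⊆ P := Finset.mem_powerset.mp hSd'.1
  have hSdprime : ∀ q ∈ Sd, q.Prime := fun q hq => hP q (hSdP hq)
  set d := ∏ q ∈ Sd, q with hd_def
  have hdpf : d.primeFactors = Sd := Nat.primeFactors_prod hSdprime
  have hd0 : d ≠ 0 := Finset.prod_ne_zero_iff.mpr fun q hq => (hSdprime q hq).pos.ne'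
  have hcard : (Sd.card : ℝ) ≤ k := by exact_mod_cast hSd'.2
  set f : Fin k → ℕ → ℝ := fun i x => if i ∈ I then 1 else h x / x with hf
  set t' : Fin k → Finset ℕ := fun i => if i ∈ I then d.primeFactors else P with ht'
  have hfnn : ∀ (i : Fin k) (x : ℕ), x ∈ t' i → 0 ≤ f i x := by
    intro i x hx
    by_cases hi : i ∈ I
    · simp [hf, hi]
    · simp only [ht', if_neg hi] at hx
      simp only [hf, if_neg hi]
      exact div_nonneg (hh0 x (hP x hx)) (Nat.cast_nonneg _)
  have hwf : ∀ p : Fin k → ℕ,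
      (∏ i ∈ Finset.univ.filter (· ∉ I), h (p i) / p i) = ∏ i : Fin k, f i (p i) := by
    intro p
    rw [← Finset.prod_filter_mul_prod_filter_not Finset.univ (· ∉ I) (fun i => f i (p i))]
    have e1 : ∏ i ∈ Finset.univ.filter (· ∉ I), f i (p i) =
        ∏ i ∈ Finset.univ.filter (· ∉ I), h (p i) / p i :=
      Finset.prod_congr rfl fun i hi => by
        simp only [Finset.mem_filter] at hi; simp [hf, hi.2]
    have e2 : ∏ i ∈ Finset.univ.filter (fun i => ¬ i ∉ I), f i (p i) = 1 :=
      Finset.prod_eq_one fun i hi => by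
        simp only [Finset.mem_filter, not_not] at hi; simp [hf, hi.2]
    rw [e1, e2, mul_one]
  calc ∑ p ∈ (Fintype.piFinset (fun _ : Fin k => P)).filter (fun p => dI p = d),
        (∏ i ∈ Finset.univ.filter (· ∉ I), h (p i) / p i) * |E (dI p)|
      = (∑ p ∈ (Fintype.piFinset (fun _ : Fin k => P)).filter (fun p => dI p = d),
          ∏ i : Fin k, f i (p i)) * |E d| := by
        rw [Finset.sum_mul]
        refine Finset.sum_congr rfl fun p hp => ?_
        rw [hwf p, (Finset.mem_filter.mp hp).2]
    _ ≤ (∑ p ∈ Fintype.piFinset t', ∏ i : Fin k, f i (p i)) * |E d| := by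
        refine mul_le_mul_of_nonneg_right ?_ (abs_nonneg _)
        refine Finset.sum_le_sum_of_subset_of_nonneg ?_
          (fun p hp _ => Finset.prod_nonneg fun i _ =>
            hfnn i (p i) ((Fintype.mem_piFinset.mp hp) i))
        intro p hp
        have hp' := Finset.mem_filter.mp hp
        have hpm : ∀ i, p i ∈ P := fun i => (Fintype.mem_piFinset.mp hp'.1) i
        refine Fintype.mem_piFinset.mpr fun i => ?_
        by_cases hi : i ∈ I
        · simp only [ht', if_pos hi]
          refine Nat.mem_primeFactors.mpr ⟨hP _ (hpm i), ?_, hd0⟩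
          rw [← hp'.2]
          exact Finset.dvd_prod_of_mem _ (Finset.mem_image_of_mem p hi)
        · simp only [ht', if_neg hi]; exact hpm i
    _ = (∏ i : Fin k, ∑ x ∈ t' i, f i x) * |E d| := by
        rw [Finset.prod_univ_sum]
    _ ≤ (k * muP1 h P) ^ k * |E d| := by
        refine mul_le_mul_of_nonneg_right ?_ (abs_nonneg _)
        have : ∏ _i : Fin k, ((k:ℝ) * muP1 h P) = ((k:ℝ) * muP1 h P) ^ k := by
          simp
        rw [← this]
        refine Finset.prod_le_prod (fun i _ => ?_) (fun i _ => ?_)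
        · by_cases hi : i ∈ I
          · simp only [ht', hf, if_pos hi]
            simp
          · simp only [ht', hf, if_neg hi]
            exact Finset.sum_nonneg fun x hx =>
              div_nonneg (hh0 x (hP x hx)) (Nat.cast_nonneg _)
        · have hk1 : (1:ℝ) ≤ k := by exact_mod_cast hk
          by_cases hi : i ∈ I
          · simp only [ht', hf, if_pos hi, Finset.sum_const, nsmul_eq_mul, mul_one]
            rw [hdpf]
            calc (Sd.card : ℝ) ≤ k := hcard
              _ ≤ k * muP1 h P := le_mul_of_one_le_right (by positivity) hmu
          · simp only [ht', hf, if_neg hi]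
            calc (∑ x ∈ P, h x / x) ≤ muP1 h P := le_of_eq rfl
              _ ≤ k * muP1 h P := le_mul_of_one_le_left hmu0 hk1

/-- **Lemma 5.5**: the accumulated error terms satisfy
`∑_{p₁,…,p_k ∈ P} g₁(p₁)⋯g_k(p_k) ∑_{s ∣ p₁⋯p_k} μ²(s) J(p₁⋯p_k, s) E_s
  ≪ μ^P(1)^k ∑_{d ∈ D_k(P)} |E_d|`. -/
theorem error_term_lemma (k : ℕ) (hk : 0 < k) (G : ℝ) (hG : 0 < G) :
    ∃ C : ℝ, ∀ (S : SieveSetup) (P : Finset ℕ), (∀ p ∈ P, p.Prime) →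
      1 ≤ muP1 S.h P →
      ∀ g : Fin k → ℕ → ℝ, (∀ j, StronglyAdditive (g j)) →
      (∀ j, ∀ p : ℕ, p.Prime → 0 ≤ g j p ∧ g j p ≤ G) →
      |∑ p ∈ Fintype.piFinset (fun _ : Fin k => P),
          (∏ i : Fin k, g i (p i)) *
            ∑ s ∈ (∏ i : Fin k, p i).divisors,
              (ArithmeticFunction.moebius s : ℝ) ^ 2 *
                Jfun S.h (∏ i : Fin k, p i) s * S.E s|
      ≤ C * muP1 S.h P ^ k * ∑ d ∈ Dk P k, |S.E d| := by
  classical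
  refine ⟨G ^ k * 4 ^ k * (k : ℝ) ^ k, ?_⟩
  intro S P hP hmu g hg hgb
  have hh0 : ∀ p : ℕ, p.Prime → 0 ≤ S.h p := fun p hp => S.h_nonneg p hp.pos
  have hh1 : ∀ p : ℕ, p.Prime → S.h p ≤ (p : ℝ) := fun p hp => S.h_le p hp.pos
  have hmu0 : (0 : ℝ) ≤ muP1 S.h P := zero_le_one.trans hmu
  set F : (Fin k → ℕ) → Finset (Fin k) → ℝ := fun p I =>
    2 ^ k * (∏ i ∈ Finset.univ.filter (· ∉ I), S.h (p i) / p i) *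
      |S.E (∏ q ∈ I.image p, q)| with hFdef
  calc |∑ p ∈ Fintype.piFinset (fun _ : Fin k => P),
          (∏ i : Fin k, g i (p i)) *
            ∑ s ∈ (∏ i : Fin k, p i).divisors,
              (ArithmeticFunction.moebius s : ℝ) ^ 2 *
                Jfun S.h (∏ i : Fin k, p i) s * S.E s|
      ≤ ∑ p ∈ Fintype.piFinset (fun _ : Fin k => P),
          |(∏ i : Fin k, g i (p i)) *
            ∑ s ∈ (∏ i : Fin k, p i).divisors,
              (ArithmeticFunction.moebius s : ℝ) ^ 2 *
                Jfun S.h (∏ i : Fin k, p i) s * S.E s| :=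
        Finset.abs_sum_le_sum_abs _ _
    _ ≤ ∑ p ∈ Fintype.piFinset (fun _ : Fin k => P),
          G ^ k * ∑ I : Finset (Fin k), F p I := by
        refine Finset.sum_le_sum fun p hpmem => ?_
        have hpm : ∀ i, p i ∈ P := fun i => (Fintype.mem_piFinset.mp hpmem) i
        have hpp : ∀ i, (p i).Prime := fun i => hP _ (hpm i)
        have hprodle : |∏ i : Fin k, g i (p i)| ≤ G ^ k := by
          rw [abs_of_nonneg (Finset.prod_nonneg fun i _ => (hgb i _ (hpp i)).1)]
          calc ∏ i : Fin k, g i (p i) ≤ ∏ _i : Fin k, G :=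
                Finset.prod_le_prod (fun i _ => (hgb i _ (hpp i)).1)
                  (fun i _ => (hgb i _ (hpp i)).2)
            _ = G ^ k := by simp
        rw [abs_mul]
        exact mul_le_mul hprodle (inner_bound S.h S.E hh0 hh1 p hpp)
          (abs_nonneg _) (by positivity)
    _ = G ^ k * ∑ I : Finset (Fin k),
          ∑ p ∈ Fintype.piFinset (fun _ : Fin k => P), F p I := by
        rw [← Finset.mul_sum, Finset.sum_comm]
    _ ≤ G ^ k * ∑ _I : Finset (Fin k),
          2 ^ k * (((k : ℝ) * muP1 S.h P) ^ k * ∑ d ∈ Dk P k, |S.E d|) := by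
        refine mul_le_mul_of_nonneg_left (Finset.sum_le_sum fun I _ => ?_)
          (by positivity)
        have : ∑ p ∈ Fintype.piFinset (fun _ : Fin k => P), F p I =
            2 ^ k * ∑ p ∈ Fintype.piFinset (fun _ : Fin k => P),
              (∏ i ∈ Finset.univ.filter (· ∉ I), S.h (p i) / p i) *
                |S.E (∏ q ∈ I.image p, q)| := by
          rw [Finset.mul_sum]
          exact Finset.sum_congr rfl fun p _ => mul_assoc _ _ _
        rw [this]
        exact mul_le_mul_of_nonneg_left
          (sum_fiber_bound hk S.h S.E hh0 P hP hmu I) (by positivity)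
    _ ≤ G ^ k * 4 ^ k * (k : ℝ) ^ k * muP1 S.h P ^ k * ∑ d ∈ Dk P k, |S.E d| := by
        rw [Finset.sum_const, Finset.card_univ, Fintype.card_finset, Fintype.card_fin,
          nsmul_eq_mul]
        rw [mul_pow, show (4:ℝ) ^ k = 2 ^ k * 2 ^ k by rw [← mul_pow]; norm_num]
        push_cast
        ring_nf
        exact le_refl _
end
end

section
/- Let k be a positive odd integer and G > 0. There is a constant C, depending only on k and G, such that the following holds. Let (A, X, h, (E_d)) be a sieve setup, let P be a finite set of primes with μ^P(1) ≥ 1, and let g₁,…,g_k be strongly additive functions with 0 ≤ g_j(p) ≤ G for all primes p and all 1 ≤ j ≤ k. Set 𝔎 = max_{1≤i,j≤k} |κ^P(g_i,g_j)| and assume 𝔎 ≥ 1. Then |Σ_{a ∈ A} Π_{j=1}^{k} F_{g_j}^P(a)| ≤ C·(X·𝔎^{(k−1)/2} + μ^P(1)^k · Σ_{d ∈ D_k(P)} |E_d|). -/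
open MeasureTheory Filter
open scoped Classical

noncomputable section

def cfun (h : ℕ → ℝ) (p a : ℕ) : ℝ := if p ∣ a then 1 - h p / p else -(h p / p)

lemma ffun_prime (h : ℕ → ℝ) {p : ℕ} (hp : p.Prime) (a : ℕ) : ffun h p a = cfun h p a := by
  rw [ffun, hp.factorization, Finsupp.prod_single_index (by simp), pow_one, cfun]

lemma msum_swap {β : Type*} (A : Multiset ℕ) (s : Finset β) (f : β → ℕ → ℝ) :
    (A.map fun a => ∑ d ∈ s, f d a).sum = ∑ d ∈ s, (A.map (f d)).sum := by
  induction A using Multiset.induction_on with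
  | empty => simp
  | cons a A ih => simp [ih, Finset.sum_add_distrib]

lemma msum_ind (A : Multiset ℕ) (p : ℕ → Prop) [DecidablePred p] :
    (A.map fun a => if p a then (1:ℝ) else 0).sum = ((A.filter p).card : ℝ) := by
  induction A using Multiset.induction_on with
  | empty => simp
  | cons a A ih =>
    by_cases h : p a <;> simp [h, ih] <;> ring

lemma sum_le_sum_inj {α β : Type*} {s : Finset α} {t : Finset β} (e : α → β)
    (he : Set.InjOn e s) (hm : ∀ a ∈ s, e a ∈ t) (f : α → ℝ) (g : β → ℝ)
    (hfg : ∀ a ∈ s, f a ≤ g (e a)) (hg : ∀ b ∈ t, 0 ≤ g b) :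
    ∑ a ∈ s, f a ≤ ∑ b ∈ t, g b := by
  calc ∑ a ∈ s, f a ≤ ∑ a ∈ s, g (e a) := Finset.sum_le_sum hfg
    _ = ∑ b ∈ s.image e, g b := (Finset.sum_image (fun a ha b hb hab => he ha hb hab)).symm
    _ ≤ ∑ b ∈ t, g b := Finset.sum_le_sum_of_subset_of_nonneg
        (Finset.image_subset_iff.mpr hm) (fun b hb _ => hg b hb)

lemma Hbound {x : ℝ} (hx0 : 0 ≤ x) (hx1 : x ≤ 1) {m : ℕ} (hm : 2 ≤ m) :
    |x * (1-x)^m + (-x)^m * (1-x)| ≤ x * (1-x) := by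
  obtain ⟨n, rfl⟩ : ∃ n, m = n + 2 := ⟨m - 2, by omega⟩
  have h1 : (0:ℝ) ≤ 1 - x := by linarith
  have e1 : (1-x)^(n+2) ≤ (1-x)^1 := pow_le_pow_of_le_one h1 (by linarith) (by omega)
  have e2 : x^(n+2) ≤ x^1 := pow_le_pow_of_le_one hx0 hx1 (by omega)
  have := abs_add_le (x * (1-x)^(n+2)) ((-x)^(n+2) * (1-x))
  have a1 : |x * (1-x)^(n+2)| = x * (1-x)^(n+2) := abs_of_nonneg (by positivity)
  have a2 : |(-x)^(n+2) * (1-x)| = x^(n+2) * (1-x) := by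
    rw [abs_mul, abs_pow, abs_neg, abs_of_nonneg hx0, abs_of_nonneg h1]
  rw [a1, a2] at this
  refine this.trans ?_
  have p1 : (1-x)^(n+2) = (1-x)^(n+1) * (1-x) := by ring
  have p2 : x^(n+2) = x^(n+1) * x := by ring
  have e1' : (1-x)^(n+1) ≤ 1-x := by simpa using pow_le_pow_of_le_one h1 (by linarith) (show 1 ≤ n+1 by omega)
  have e2' : x^(n+1) ≤ x := by simpa using pow_le_pow_of_le_one hx0 hx1 (show 1 ≤ n+1 by omega)
  have hp1 : (0:ℝ) ≤ (1-x)^(n+1) := by positivity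
  have hp2 : (0:ℝ) ≤ x^(n+1) := by positivity
  nlinarith [mul_nonneg hx0 h1]

lemma h_prod (h : ℕ → ℝ) (h1 : h 1 = 1)
    (hmul : ∀ m n : ℕ, Nat.Coprime m n → h (m * n) = h m * h n)
    {d : Finset ℕ} (hd : ∀ p ∈ d, p.Prime) :
    h (∏ p ∈ d, p) = ∏ p ∈ d, h p := by
  induction d using Finset.induction_on with
  | empty => simpa using h1
  | @insert p s hp ih =>
    rw [Finset.prod_insert hp, Finset.prod_insert hp,
      hmul p (∏ q ∈ s, q) (Nat.Coprime.prod_right fun q hq =>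
        (Nat.coprime_primes (hd p (Finset.mem_insert_self p s))
          (hd q (Finset.mem_insert_of_mem hq))).mpr (fun e => hp (e ▸ hq))),
      ih (fun q hq => hd q (Finset.mem_insert_of_mem hq))]

lemma prod_primes_pos {d : Finset ℕ} (hd : ∀ p ∈ d, p.Prime) : 0 < ∏ p ∈ d, p :=
  Finset.prod_pos fun p hp => (hd p hp).pos

lemma prod_primes_inj {d₁ d₂ : Finset ℕ} (h1 : ∀ p ∈ d₁, p.Prime) (h2 : ∀ p ∈ d₂, p.Prime)
    (he : ∏ p ∈ d₁, p = ∏ p ∈ d₂, p) : d₁ = d₂ := by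
  have key : ∀ (s t : Finset ℕ), (∀ p ∈ s, p.Prime) → (∀ p ∈ t, p.Prime) →
      (∏ p ∈ s, p = ∏ p ∈ t, p) → ∀ p ∈ s, p ∈ t := by
    intro s t hs ht hst p hp
    have : p ∣ ∏ q ∈ t, q := hst ▸ Finset.dvd_prod_of_mem _ hp
    obtain ⟨q, hq, hpq⟩ := ((hs p hp).prime.dvd_finset_prod_iff _).mp this
    rwa [((Nat.prime_dvd_prime_iff_eq (hs p hp) (ht q hq)).mp hpq)]
  exact Finset.ext fun p => ⟨fun hp => key d₁ d₂ h1 h2 he p hp, fun hp => key d₂ d₁ h2 h1 he.symm p hp⟩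

lemma ind_prod {d : Finset ℕ} (hd : ∀ p ∈ d, p.Prime) (a : ℕ) :
    (∏ p ∈ d, if p ∣ a then (1:ℝ) else 0) = if (∏ p ∈ d, p) ∣ a then 1 else 0 := by
  by_cases hall : ∀ p ∈ d, p ∣ a
  · rw [Finset.prod_congr rfl (fun p hp => if_pos (hall p hp)), Finset.prod_const_one,
      if_pos (Finset.prod_primes_dvd a (fun p hp => (hd p hp).prime) hall)]
  · push_neg at hall
    obtain ⟨p₀, hp₀, hnd⟩ := hall
    rw [Finset.prod_eq_zero (f := fun p => if p ∣ a then (1:ℝ) else 0) hp₀ (by simp [hnd]),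
      eq_comm, if_neg]
    intro hdvd
    exact hnd ((Finset.dvd_prod_of_mem _ hp₀).trans hdvd)

lemma Bbound {x : ℝ} (hx0 : 0 ≤ x) (hx1 : x ≤ 1) {m : ℕ} (hm : 1 ≤ m) :
    |(1-x)^m - (-x)^m| ≤ 1 := by
  have h1 : (0:ℝ) ≤ 1 - x := by linarith
  have e1 : (1-x)^m ≤ 1-x := by simpa using pow_le_pow_of_le_one h1 (by linarith) hm
  have e2 : x^m ≤ x := by simpa using pow_le_pow_of_le_one hx0 hx1 hm
  have := abs_sub ((1-x)^m) ((-x)^m)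
  rw [abs_pow, abs_pow, abs_neg, abs_of_nonneg hx0, abs_of_nonneg h1] at this
  refine this.trans ?_
  nlinarith [pow_nonneg hx0 m, pow_nonneg h1 m]

def mm {k : ℕ} (π : Fin k → ℕ) (p : ℕ) : ℕ := (Finset.univ.filter fun j => π j = p).card

def Hterm (h : ℕ → ℝ) (p : ℕ) (m : ℕ) : ℝ :=
  h p / p * (1 - h p / p) ^ m + (-(h p / p)) ^ m * (1 - h p / p)

lemma key_identity {k : ℕ} (A : Multiset ℕ) (X : ℝ) (h E : ℕ → ℝ)
    (h1 : h 1 = 1) (hmul : ∀ m n : ℕ, Nat.Coprime m n → h (m * n) = h m * h n)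
    (hcount : ∀ d : ℕ, 0 < d → ((A.filter (fun a => d ∣ a)).card : ℝ) = h d / d * X + E d)
    (P : Finset ℕ) (hP : ∀ p ∈ P, p.Prime) (π : Fin k → ℕ) (hπ : ∀ j, π j ∈ P) :
    (A.map fun a => ∏ j, cfun h (π j) a).sum
    = X * (∏ p ∈ Finset.image π Finset.univ, Hterm h p (mm π p))
    + ∑ d ∈ (Finset.image π Finset.univ).powerset,
        ((∏ p ∈ d, ((1 - h p / p) ^ mm π p - (-(h p / p)) ^ mm π p)) *
         ∏ p ∈ (Finset.image π Finset.univ) \ d, (-(h p / p)) ^ mm π p) * E (∏ p ∈ d, p) := by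
  set T := Finset.image π Finset.univ with hT
  have hTP : ∀ p ∈ T, p.Prime := by
    intro p hp
    obtain ⟨j, _, rfl⟩ := Finset.mem_image.mp hp
    exact hP _ (hπ j)
  set B : ℕ → ℝ := fun p => (1 - h p / p) ^ mm π p - (-(h p / p)) ^ mm π p with hB
  set Af : ℕ → ℝ := fun p => (-(h p / p)) ^ mm π p with hA
  -- pointwise expansion
  have step1 : ∀ a : ℕ, ∏ j, cfun h (π j) a
      = ∑ d ∈ T.powerset,
          (if (∏ p ∈ d, p) ∣ a then (1:ℝ) else 0) * ((∏ p ∈ d, B p) * ∏ p ∈ T \ d, Af p) := by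
    intro a
    have e1 : ∏ j, cfun h (π j) a = ∏ p ∈ T, (cfun h p a) ^ mm π p := by
      have := Finset.prod_comp (s := (Finset.univ : Finset (Fin k))) (fun p => cfun h p a) π
      rw [hT]
      exact this
    have e2 : ∀ p ∈ T, (cfun h p a) ^ mm π p
        = (if p ∣ a then (1:ℝ) else 0) * B p + Af p := by
      intro p _
      by_cases hpa : p ∣ a <;> simp [cfun, hpa, hB, hA]
    rw [e1, Finset.prod_congr rfl e2, Finset.prod_add]
    refine Finset.sum_congr rfl fun d hd => ?_
    have hdT : d ⊆ T := Finset.mem_powerset.mp hd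
    rw [Finset.prod_mul_distrib, ind_prod (fun p hp => hTP p (hdT hp)) a]
    ring
  -- sum over A
  have step2 : (A.map fun a => ∏ j, cfun h (π j) a).sum
      = ∑ d ∈ T.powerset, (h (∏ p ∈ d, p) / (∏ p ∈ d, p) * X + E (∏ p ∈ d, p)) *
          ((∏ p ∈ d, B p) * ∏ p ∈ T \ d, Af p) := by
    have := msum_swap A T.powerset (fun d a =>
      (if (∏ p ∈ d, p) ∣ a then (1:ℝ) else 0) * ((∏ p ∈ d, B p) * ∏ p ∈ T \ d, Af p))
    rw [show (A.map fun a => ∏ j, cfun h (π j) a) = (A.map fun a => ∑ d ∈ T.powerset,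
      (if (∏ p ∈ d, p) ∣ a then (1:ℝ) else 0) * ((∏ p ∈ d, B p) * ∏ p ∈ T \ d, Af p))
      from congrArg (fun f => Multiset.map f A) (funext step1), this]
    refine Finset.sum_congr rfl fun d hd => ?_
    have hdP : ∀ p ∈ d, p.Prime := fun p hp => hTP p (Finset.mem_powerset.mp hd hp)
    rw [Multiset.sum_map_mul_right, msum_ind, hcount _ (prod_primes_pos hdP)]
  rw [step2]
  -- split main and error
  have split : ∀ d ∈ T.powerset,
      (h (∏ p ∈ d, p) / (∏ p ∈ d, p) * X + E (∏ p ∈ d, p)) *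
          ((∏ p ∈ d, B p) * ∏ p ∈ T \ d, Af p)
      = X * ((∏ p ∈ d, (h p / p * B p)) * ∏ p ∈ T \ d, Af p)
        + ((∏ p ∈ d, B p) * ∏ p ∈ T \ d, Af p) * E (∏ p ∈ d, p) := by
    intro d hd
    have hdP : ∀ p ∈ d, p.Prime := fun p hp => hTP p (Finset.mem_powerset.mp hd hp)
    have hq : h (∏ p ∈ d, p) / (∏ p ∈ d, p) = ∏ p ∈ d, (h p / p) := by
      rw [h_prod h h1 hmul hdP, Nat.cast_prod, ← Finset.prod_div_distrib]
    rw [hq, Finset.prod_mul_distrib]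
    ring
  rw [Finset.sum_congr rfl split, Finset.sum_add_distrib, ← Finset.mul_sum]
  congr 1
  rw [← Finset.prod_add]
  exact congrArg (X * ·) (Finset.prod_congr rfl fun p _ => by simp only [Hterm, hB, hA]; ring)

lemma Hone' (h : ℕ → ℝ) (p : ℕ) : Hterm h p 1 = 0 := by simp [Hterm]

lemma Hbound' (h : ℕ → ℝ) {p : ℕ} (hx0 : 0 ≤ h p / p) (hx1 : h p / p ≤ 1) {m : ℕ}
    (hm : 2 ≤ m) : |Hterm h p m| ≤ h p / p * (1 - h p / p) := by
  simpa [Hterm] using Hbound hx0 hx1 hm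

def cpat {k : ℕ} (π : Fin k → ℕ) (j : Fin k) : Fin k :=
  (Finset.univ.filter fun i => π i = π j).min'
    ⟨j, Finset.mem_filter.mpr ⟨Finset.mem_univ j, rfl⟩⟩

lemma cpat_apply {k : ℕ} (π : Fin k → ℕ) (j : Fin k) : π (cpat π j) = π j := by
  have := Finset.min'_mem (Finset.univ.filter fun i => π i = π j)
    ⟨j, Finset.mem_filter.mpr ⟨Finset.mem_univ j, rfl⟩⟩
  exact (Finset.mem_filter.mp this).2

lemma cpat_congr {k : ℕ} (π : Fin k → ℕ) {i j : Fin k} (hij : π i = π j) :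
    cpat π i = cpat π j := by
  unfold cpat
  congr 1
  ext i'
  simp [hij]

lemma cpat_eq_iff {k : ℕ} (π : Fin k → ℕ) (i j : Fin k) :
    cpat π i = cpat π j ↔ π i = π j := by
  constructor
  · intro hc
    have h1 := cpat_apply π i
    have h2 := cpat_apply π j
    rw [← h1, hc, h2]
  · exact cpat_congr π

lemma cpat_idem {k : ℕ} (π : Fin k → ℕ) (j : Fin k) : cpat π (cpat π j) = cpat π j :=
  cpat_congr π (cpat_apply π j)

lemma perc_bound {k : ℕ} (hk : 0 < k) (hko : Odd k) (h : ℕ → ℝ) (P : Finset ℕ)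
    (hx0 : ∀ p ∈ P, 0 ≤ h p / p) (hx1 : ∀ p ∈ P, h p / p ≤ 1)
    (G' : ℝ) (hG'1 : 1 ≤ G') (g : Fin k → ℕ → ℝ)
    (hg0 : ∀ j, ∀ p ∈ P, 0 ≤ g j p) (hgG : ∀ j, ∀ p ∈ P, g j p ≤ G')
    (K : ℝ) (hK : ∀ i j, |kappaP h P (g i) (g j)| ≤ K) (hK1 : 1 ≤ K)
    (c : Fin k → Fin k) :
    ∑ π ∈ (Fintype.piFinset fun _ : Fin k => P).filter (fun π => cpat π = c),
      |(∏ j, g j (π j)) * ∏ p ∈ Finset.image π Finset.univ, Hterm h p (mm π p)|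
    ≤ G' ^ k * K ^ (((k:ℝ) - 1) / 2) := by
  have hK0 : (0:ℝ) < K := lt_of_lt_of_le one_pos hK1
  have hRHS0 : (0:ℝ) ≤ G' ^ k * K ^ (((k:ℝ) - 1) / 2) := by
    apply mul_nonneg (pow_nonneg (le_trans zero_le_one hG'1) k)
    exact (Real.rpow_pos_of_pos hK0 _).le
  by_cases hne : ((Fintype.piFinset fun _ : Fin k => P).filter (fun π => cpat π = c)).Nonempty
  swap
  · rw [Finset.not_nonempty_iff_eq_empty.mp hne, Finset.sum_empty]; exact hRHS0
  obtain ⟨π₀, hπ₀⟩ := hne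
  have hc₀ : cpat π₀ = c := (Finset.mem_filter.mp hπ₀).2
  -- structural facts about c
  have idem : ∀ j, c (c j) = c j := by
    intro j; rw [← hc₀]; exact cpat_idem π₀ j
  have fact1 : ∀ π, cpat π = c → ∀ i j : Fin k, (c i = c j ↔ π i = π j) := by
    intro π hc i j; rw [← hc]; exact cpat_eq_iff π i j
  have fact2 : ∀ π, cpat π = c → ∀ j, π (c j) = π j := by
    intro π hc j; rw [← hc]; exact cpat_apply π j
  set R : Finset (Fin k) := Finset.univ.filter (fun r => c r = r) with hR
  have hcjR : ∀ j, c j ∈ R := fun j => Finset.mem_filter.mpr ⟨Finset.mem_univ _, idem j⟩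
  set β : Fin k → ℕ := fun r => (Finset.univ.filter fun j => c j = r).card with hβ
  have hsumβ : ∑ r ∈ R, β r = k := by
    have h1 : ∑ r : Fin k, β r = k := by
      have := (Finset.card_eq_sum_card_fiberwise
        (s := (Finset.univ : Finset (Fin k))) (t := Finset.univ) (f := c)
        (fun j _ => Finset.mem_univ (c j))).symm
      simpa using this
    have h2 : ∑ r ∈ Finset.univ.filter (fun r => ¬ c r = r), β r = 0 := by
      apply Finset.sum_eq_zero
      intro r hr
      rw [hβ]
      simp only [Finset.card_eq_zero, Finset.filter_eq_empty_iff]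
      intro j _ hj
      exact absurd (((congrArg c hj).symm.trans (idem j)).trans hj) (Finset.mem_filter.mp hr).2
    have h3 := Finset.sum_filter_add_sum_filter_not Finset.univ (fun r => c r = r) β
    rw [← hR] at h3
    rw [h2, add_zero] at h3
    rw [h3]
    exact h1
  by_cases hbig : ∀ r ∈ R, 2 ≤ β r
  swap
  · -- some fiber has one element: all terms vanish
    push_neg at hbig
    obtain ⟨r, hrR, hrsmall⟩ := hbig
    have hrβ : β r = 1 := by
      have : r ∈ Finset.univ.filter fun j => c j = r :=
        Finset.mem_filter.mpr ⟨Finset.mem_univ _, (Finset.mem_filter.mp hrR).2⟩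
      have hpos : 0 < β r := Finset.card_pos.mpr ⟨r, this⟩
      omega
    have : ∀ π ∈ (Fintype.piFinset fun _ : Fin k => P).filter (fun π => cpat π = c),
        |(∏ j, g j (π j)) * ∏ p ∈ Finset.image π Finset.univ, Hterm h p (mm π p)| = 0 := by
      intro π hπ
      have hc : cpat π = c := (Finset.mem_filter.mp hπ).2
      have hmem : π r ∈ Finset.image π Finset.univ :=
        Finset.mem_image.mpr ⟨r, Finset.mem_univ _, rfl⟩
      have hmm : mm π (π r) = 1 := by
        rw [mm, ← hrβ, hβ]
        congr 1
        ext j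
        simp only [Finset.mem_filter, Finset.mem_univ, true_and]
        rw [← fact1 π hc j r]
        constructor
        · intro hj; rw [hj]; exact (Finset.mem_filter.mp hrR).2
        · intro hj; rw [hj, (Finset.mem_filter.mp hrR).2]
      rw [Finset.prod_eq_zero hmem (by rw [hmm]; exact Hone' h (π r)), mul_zero, abs_zero]
    rw [Finset.sum_congr rfl this, Finset.sum_const_zero]
    exact hRHS0
  -- main case: all fibers ≥ 2
  have hsr0 : ∀ r : Fin k, ∃ s : Fin k, r ∈ R → (c s = r ∧ s ≠ r) := by
    intro r
    by_cases hr : r ∈ R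
    · have hlt : 1 < (Finset.univ.filter fun j => c j = r).card := hbig r hr
      obtain ⟨s, hs, hsne⟩ := Finset.exists_mem_ne hlt r
      exact ⟨s, fun _ => ⟨(Finset.mem_filter.mp hs).2, hsne⟩⟩
    · exact ⟨r, fun h => absurd h hr⟩
  choose sr hsrP using hsr0
  set u : Fin k → ℕ → ℝ :=
    fun r p => G' ^ (β r - 2) * (g r p * g (sr r) p * (h p / p * (1 - h p / p))) with hu
  have hu_nonneg : ∀ r, ∀ p ∈ P, 0 ≤ u r p := by
    intro r p hp
    apply mul_nonneg (pow_nonneg (le_trans zero_le_one hG'1) _)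
    apply mul_nonneg (mul_nonneg (hg0 r p hp) (hg0 (sr r) p hp))
    exact mul_nonneg (hx0 p hp) (by linarith [hx1 p hp])
  calc ∑ π ∈ (Fintype.piFinset fun _ : Fin k => P).filter (fun π => cpat π = c),
        |(∏ j, g j (π j)) * ∏ p ∈ Finset.image π Finset.univ, Hterm h p (mm π p)|
      ≤ ∑ q ∈ R.pi (fun _ => P), ∏ r ∈ R.attach, u r.1 (q r.1 r.2) := by
        apply sum_le_sum_inj (e := fun π => (fun r _ => π r : ∀ r ∈ R, ℕ))
        · -- injectivity
          intro π hπ π' hπ' heq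
          simp only [Finset.coe_filter, Set.mem_setOf_eq] at hπ hπ'
          funext j
          have h1 : π (c j) = π' (c j) := congrFun (congrFun heq (c j)) (hcjR j)
          rw [← fact2 π hπ.2 j, ← fact2 π' hπ'.2 j, h1]
        · -- membership
          intro π hπ
          have hπP := Fintype.mem_piFinset.mp (Finset.mem_filter.mp hπ).1
          exact Finset.mem_pi.mpr fun r _ => hπP r
        · -- pointwise bound
          intro π hπ
          have hcπ : cpat π = c := (Finset.mem_filter.mp hπ).2
          have hπP := Fintype.mem_piFinset.mp (Finset.mem_filter.mp hπ).1
          have goalr : ∏ r ∈ R.attach, u r.1 (π r.1) = ∏ r ∈ R, u r (π r) :=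
            Finset.prod_attach R (fun r => u r (π r))
          rw [goalr]
          -- image equals image over R, injectively
          have injR : ∀ x ∈ R, ∀ y ∈ R, π x = π y → x = y := by
            intro x hx y hy hxy
            have := (fact1 π hcπ x y).mpr hxy
            rw [(Finset.mem_filter.mp hx).2, (Finset.mem_filter.mp hy).2] at this
            exact this
          have imeq : Finset.image π Finset.univ = Finset.image π R := by
            apply Finset.Subset.antisymm
            · intro p hp
              obtain ⟨j, _, rfl⟩ := Finset.mem_image.mp hp
              exact Finset.mem_image.mpr ⟨c j, hcjR j, fact2 π hcπ j⟩
            · exact Finset.image_subset_image (Finset.subset_univ R)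
          have Msplit : ∏ p ∈ Finset.image π Finset.univ, Hterm h p (mm π p)
              = ∏ r ∈ R, Hterm h (π r) (mm π (π r)) := by
            rw [imeq, Finset.prod_image injR]
          have mmeq : ∀ r ∈ R, mm π (π r) = β r := by
            intro r hr
            rw [mm, hβ]
            congr 1
            ext j
            simp only [Finset.mem_filter, Finset.mem_univ, true_and]
            rw [← fact1 π hcπ j r, (Finset.mem_filter.mp hr).2]
          have wsplit : (∏ j, g j (π j))
              = ∏ r ∈ R, ∏ j ∈ Finset.univ.filter (fun j => c j = r), g j (π j) :=
            (Finset.prod_fiberwise_of_maps_to (fun j _ => hcjR j) _).symm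
          have Msplit2 : ∏ r ∈ R, Hterm h (π r) (mm π (π r)) = ∏ r ∈ R, Hterm h (π r) (β r) :=
            Finset.prod_congr rfl fun r hr => by rw [mmeq r hr]
          rw [wsplit, Msplit, Msplit2, ← Finset.prod_mul_distrib, Finset.abs_prod]
          apply Finset.prod_le_prod (fun r _ => abs_nonneg _)
          intro r hr
          have hcr : c r = r := (Finset.mem_filter.mp hr).2
          have hpP : π r ∈ P := hπP r
          set p := π r with hp
          have hinner : ∀ j ∈ Finset.univ.filter (fun j => c j = r), g j (π j) = g j p := by
            intro j hj
            have : π j = π r := (fact1 π hcπ j r).mp ((Finset.mem_filter.mp hj).2.trans hcr.symm)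
            rw [this]
          have hinner' : ∏ j ∈ Finset.univ.filter (fun j => c j = r), g j (π j)
              = ∏ j ∈ Finset.univ.filter (fun j => c j = r), g j p :=
            Finset.prod_congr rfl hinner
          rw [hinner', abs_mul]
          have hfib_r : r ∈ Finset.univ.filter (fun j => c j = r) :=
            Finset.mem_filter.mpr ⟨Finset.mem_univ _, hcr⟩
          have hfib_sr : sr r ∈ (Finset.univ.filter (fun j => c j = r)).erase r :=
            Finset.mem_erase.mpr ⟨(hsrP r hr).2, Finset.mem_filter.mpr
              ⟨Finset.mem_univ _, (hsrP r hr).1⟩⟩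
          have hprod_nonneg : (0:ℝ) ≤ ∏ j ∈ Finset.univ.filter (fun j => c j = r), g j p :=
            Finset.prod_nonneg fun j _ => hg0 j p hpP
          rw [abs_of_nonneg hprod_nonneg]
          have hrest : ∏ j ∈ ((Finset.univ.filter (fun j => c j = r)).erase r).erase (sr r),
              g j p ≤ G' ^ (β r - 2) := by
            calc ∏ j ∈ ((Finset.univ.filter (fun j => c j = r)).erase r).erase (sr r), g j p
                ≤ ∏ j ∈ ((Finset.univ.filter (fun j => c j = r)).erase r).erase (sr r), G' :=
                  Finset.prod_le_prod (fun j _ => hg0 j p hpP) (fun j _ => hgG j p hpP)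
              _ = G' ^ (β r - 2) := by
                  rw [Finset.prod_const, Finset.card_erase_of_mem hfib_sr,
                    Finset.card_erase_of_mem hfib_r]
                  congr 1 <;> simp only [hβ] <;> omega
          have hw : ∏ j ∈ Finset.univ.filter (fun j => c j = r), g j p
              ≤ g r p * (g (sr r) p * G' ^ (β r - 2)) := by
            rw [← Finset.mul_prod_erase _ _ hfib_r, ← Finset.mul_prod_erase _ _ hfib_sr]
            apply mul_le_mul_of_nonneg_left _ (hg0 r p hpP)
            apply mul_le_mul_of_nonneg_left hrest (hg0 (sr r) p hpP)
          have hH : |Hterm h p (β r)| ≤ h p / p * (1 - h p / p) :=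
            Hbound' h (hx0 p hpP) (hx1 p hpP) (hbig r hr)
          calc (∏ j ∈ Finset.univ.filter (fun j => c j = r), g j p) * |Hterm h p (β r)|
              ≤ (g r p * (g (sr r) p * G' ^ (β r - 2))) * (h p / p * (1 - h p / p)) := by
                apply mul_le_mul hw hH (abs_nonneg _)
                apply mul_nonneg (hg0 r p hpP)
                exact mul_nonneg (hg0 (sr r) p hpP) (pow_nonneg (le_trans zero_le_one hG'1) _)
            _ = u r p := by rw [hu]; ring
        · -- nonnegativity on target
          intro q hq
          exact Finset.prod_nonneg fun r _ => hu_nonneg r.1 _ (Finset.mem_pi.mp hq r.1 r.2)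
    _ = ∏ r ∈ R, ∑ p ∈ P, u r p := (Finset.prod_sum R (fun _ => P) (fun r p => u r p)).symm
    _ ≤ ∏ r ∈ R, (G' ^ (β r - 2) * K) := by
        apply Finset.prod_le_prod
        · intro r _
          exact Finset.sum_nonneg fun p hp => hu_nonneg r p hp
        · intro r hr
          have : ∑ p ∈ P, u r p = G' ^ (β r - 2) * kappaP h P (g r) (g (sr r)) := by
            rw [← Finset.mul_sum, kappaP]
            congr 1
            exact Finset.sum_congr rfl fun p _ => by ring
          rw [this]
          apply mul_le_mul_of_nonneg_left _ (pow_nonneg (le_trans zero_le_one hG'1) _)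
          exact (le_abs_self _).trans (hK r (sr r))
    _ = G' ^ (∑ r ∈ R, (β r - 2)) * K ^ R.card := by
        rw [Finset.prod_mul_distrib, Finset.prod_pow_eq_pow_sum, Finset.prod_const]
    _ ≤ G' ^ k * K ^ (((k:ℝ) - 1) / 2) := by
        have hG'0 : (0:ℝ) ≤ G' := le_trans zero_le_one hG'1
        have e1 : G' ^ (∑ r ∈ R, (β r - 2)) ≤ G' ^ k := by
          apply pow_le_pow_right₀ hG'1
          calc ∑ r ∈ R, (β r - 2) ≤ ∑ r ∈ R, β r := Finset.sum_le_sum fun r _ => Nat.sub_le _ _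
            _ = k := hsumβ
        have h2R : 2 * R.card ≤ k := by
          have : ∑ r ∈ R, 2 ≤ ∑ r ∈ R, β r := Finset.sum_le_sum fun r hr => hbig r hr
          rw [Finset.sum_const, hsumβ, smul_eq_mul] at this
          omega
        have h2R' : 2 * R.card ≤ k - 1 := by
          obtain ⟨m, hm⟩ := hko
          omega
        have e2 : K ^ R.card ≤ K ^ (((k:ℝ) - 1) / 2) := by
          rw [← Real.rpow_natCast K R.card]
          apply Real.rpow_le_rpow_of_exponent_le hK1
          have h3 : 2 * R.card + 1 ≤ k := by omega
          have h4 : ((2 * R.card + 1 : ℕ) : ℝ) ≤ (k : ℝ) := Nat.cast_le.mpr h3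
          push_cast at h4 ⊢
          linarith
        exact mul_le_mul e1 e2 (pow_nonneg hK0.le _) (pow_nonneg hG'0 _)

lemma main_bound {k : ℕ} (hk : 0 < k) (hko : Odd k) (h : ℕ → ℝ) (P : Finset ℕ)
    (hx0 : ∀ p ∈ P, 0 ≤ h p / p) (hx1 : ∀ p ∈ P, h p / p ≤ 1)
    (G' : ℝ) (hG'1 : 1 ≤ G') (g : Fin k → ℕ → ℝ)
    (hg0 : ∀ j, ∀ p ∈ P, 0 ≤ g j p) (hgG : ∀ j, ∀ p ∈ P, g j p ≤ G')
    (K : ℝ) (hK : ∀ i j, |kappaP h P (g i) (g j)| ≤ K) (hK1 : 1 ≤ K) :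
    ∑ π ∈ (Fintype.piFinset fun _ : Fin k => P),
      |(∏ j, g j (π j)) * ∏ p ∈ Finset.image π Finset.univ, Hterm h p (mm π p)|
    ≤ (k:ℝ) ^ k * (G' ^ k * K ^ (((k:ℝ) - 1) / 2)) := by
  classical
  have swap := Finset.sum_fiberwise_eq_sum_filter (Fintype.piFinset fun _ : Fin k => P)
    (Finset.univ : Finset (Fin k → Fin k)) (fun π => cpat π)
    (fun π => |(∏ j, g j (π j)) * ∏ p ∈ Finset.image π Finset.univ, Hterm h p (mm π p)|)
  simp only [Finset.mem_univ, Finset.filter_true] at swap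
  rw [← swap]
  calc ∑ c : Fin k → Fin k, ∑ π ∈ (Fintype.piFinset fun _ : Fin k => P).filter
        (fun π => cpat π = c),
        |(∏ j, g j (π j)) * ∏ p ∈ Finset.image π Finset.univ, Hterm h p (mm π p)|
      ≤ ∑ _c : Fin k → Fin k, G' ^ k * K ^ (((k:ℝ) - 1) / 2) :=
        Finset.sum_le_sum fun c _ =>
          perc_bound hk hko h P hx0 hx1 G' hG'1 g hg0 hgG K hK hK1 c
    _ = (Fintype.card (Fin k → Fin k) : ℝ) * (G' ^ k * K ^ (((k:ℝ) - 1) / 2)) := by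
        rw [Finset.sum_const, Finset.card_univ, nsmul_eq_mul]
    _ = (k:ℝ) ^ k * (G' ^ k * K ^ (((k:ℝ) - 1) / 2)) := by
        rw [Fintype.card_fun, Fintype.card_fin]
        push_cast
        ring

lemma factor_bound {k : ℕ} (h : ℕ → ℝ) (P : Finset ℕ)
    (hx0 : ∀ p ∈ P, 0 ≤ h p / p) (G' : ℝ) (hG'1 : 1 ≤ G') (gg : ℕ → ℝ)
    (hg0 : ∀ p ∈ P, 0 ≤ gg p) (hgG : ∀ p ∈ P, gg p ≤ G')
    (hμ : 1 ≤ ∑ p ∈ P, h p / p) (d : Finset ℕ) (hd : d.card ≤ k) :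
    ∑ p ∈ P, gg p * (if p ∈ d then 1 else h p / p) ≤ G' * ((k:ℝ) + 1) * (∑ p ∈ P, h p / p) := by
  have hG'0 : (0:ℝ) ≤ G' := le_trans zero_le_one hG'1
  have step1 : ∑ p ∈ P, gg p * (if p ∈ d then 1 else h p / p)
      ≤ ∑ p ∈ P, ((if p ∈ d then G' else 0) + G' * (h p / p)) := by
    apply Finset.sum_le_sum
    intro p hp
    by_cases hpd : p ∈ d
    · simp only [hpd, if_true, mul_one]
      have := mul_nonneg hG'0 (hx0 p hp)
      linarith [hgG p hp]
    · simp only [hpd, if_false, zero_add]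
      exact mul_le_mul_of_nonneg_right (hgG p hp) (hx0 p hp)
  have step2 : ∑ p ∈ P, ((if p ∈ d then G' else 0) + G' * (h p / p))
      = (∑ p ∈ P, if p ∈ d then G' else 0) + G' * ∑ p ∈ P, h p / p := by
    rw [Finset.sum_add_distrib, Finset.mul_sum]
  have step3 : (∑ p ∈ P, if p ∈ d then G' else 0) ≤ (k:ℝ) * G' := by
    rw [← Finset.sum_filter]
    rw [Finset.sum_const]
    have hcard : (P.filter (· ∈ d)).card ≤ k := by
      refine le_trans (Finset.card_le_card fun p hp => (Finset.mem_filter.mp hp).2) hd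
    calc ((P.filter (· ∈ d)).card : ℕ) • G' = ((P.filter (· ∈ d)).card : ℝ) * G' := by
          rw [nsmul_eq_mul]
      _ ≤ (k:ℝ) * G' := by
          apply mul_le_mul_of_nonneg_right _ hG'0
          exact_mod_cast hcard
  have hk0 : (0:ℝ) ≤ (k:ℝ) := Nat.cast_nonneg k
  nlinarith [mul_nonneg (mul_nonneg hG'0 hk0) (sub_nonneg.mpr hμ)]

set_option maxHeartbeats 1000000 in
lemma err_bound {k : ℕ} (h : ℕ → ℝ) (P : Finset ℕ) (hP : ∀ p ∈ P, p.Prime)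
    (hx0 : ∀ p ∈ P, 0 ≤ h p / p) (hx1 : ∀ p ∈ P, h p / p ≤ 1)
    (G' : ℝ) (hG'1 : 1 ≤ G') (g : Fin k → ℕ → ℝ)
    (hg0 : ∀ j, ∀ p ∈ P, 0 ≤ g j p) (hgG : ∀ j, ∀ p ∈ P, g j p ≤ G')
    (hμ : 1 ≤ ∑ p ∈ P, h p / p) (E : ℕ → ℝ) :
    ∑ π ∈ (Fintype.piFinset fun _ : Fin k => P), |(∏ j, g j (π j)) *
      ∑ d ∈ (Finset.image π Finset.univ).powerset,
        ((∏ p ∈ d, ((1 - h p / p) ^ mm π p - (-(h p / p)) ^ mm π p)) *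
         ∏ p ∈ (Finset.image π Finset.univ) \ d, (-(h p / p)) ^ mm π p) * E (∏ p ∈ d, p)|
    ≤ (G' * ((k:ℝ) + 1)) ^ k * (∑ p ∈ P, h p / p) ^ k *
      ∑ d ∈ P.powerset.filter (fun s => s.card ≤ k), |E (∏ p ∈ d, p)| := by
  classical
  have hG'0 : (0:ℝ) ≤ G' := le_trans zero_le_one hG'1
  set Dset := P.powerset.filter (fun s : Finset ℕ => s.card ≤ k) with hDset
  have step1 : ∀ π ∈ (Fintype.piFinset fun _ : Fin k => P), |(∏ j, g j (π j)) *
      ∑ d ∈ (Finset.image π Finset.univ).powerset,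
        ((∏ p ∈ d, ((1 - h p / p) ^ mm π p - (-(h p / p)) ^ mm π p)) *
         ∏ p ∈ (Finset.image π Finset.univ) \ d, (-(h p / p)) ^ mm π p) * E (∏ p ∈ d, p)|
      ≤ ∑ d ∈ Dset,
          (∏ j, (g j (π j) * (if π j ∈ d then 1 else h (π j) / (π j)))) * |E (∏ p ∈ d, p)| := by
    intro π hπ
    have hπP : ∀ j, π j ∈ P := Fintype.mem_piFinset.mp hπ
    set T := Finset.image π Finset.univ with hT
    have hw0 : 0 ≤ ∏ j, g j (π j) := Finset.prod_nonneg fun j _ => hg0 j _ (hπP j)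
    have hTpow : T.powerset ⊆ Dset := by
      intro d hd
      have hdT : d ⊆ T := Finset.mem_powerset.mp hd
      refine Finset.mem_filter.mpr ⟨Finset.mem_powerset.mpr ?_, ?_⟩
      · exact hdT.trans (fun p hp => by
          obtain ⟨j, _, rfl⟩ := Finset.mem_image.mp hp; exact hπP j)
      · calc d.card ≤ T.card := Finset.card_le_card hdT
          _ ≤ (Finset.univ : Finset (Fin k)).card := Finset.card_image_le
          _ = k := by simp
    have hmm1 : ∀ p ∈ T, 1 ≤ mm π p := by
      intro p hp
      obtain ⟨j, _, rfl⟩ := Finset.mem_image.mp hp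
      exact Finset.card_pos.mpr ⟨j, Finset.mem_filter.mpr ⟨Finset.mem_univ _, rfl⟩⟩
    -- termwise bound on powerset of T
    have key : ∀ d ∈ T.powerset,
        |((∏ p ∈ d, ((1 - h p / p) ^ mm π p - (-(h p / p)) ^ mm π p)) *
          ∏ p ∈ T \ d, (-(h p / p)) ^ mm π p)|
        ≤ ∏ j, (if π j ∈ d then (1:ℝ) else h (π j) / (π j)) := by
      intro d hd
      have hdT : d ⊆ T := Finset.mem_powerset.mp hd
      have hite : ∏ j, (if π j ∈ d then (1:ℝ) else h (π j) / (π j))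
          = ∏ p ∈ T, (if p ∈ d then (1:ℝ) else h p / p) ^ mm π p := by
        rw [hT]
        exact Finset.prod_comp (fun p => if p ∈ d then (1:ℝ) else h p / p) π
      rw [hite, ← Finset.prod_sdiff hdT, abs_mul, Finset.abs_prod, Finset.abs_prod]
      have e1 : ∏ p ∈ T \ d, (if p ∈ d then (1:ℝ) else h p / p) ^ mm π p
          = ∏ p ∈ T \ d, (h p / p) ^ mm π p :=
        Finset.prod_congr rfl fun p hp => by
          rw [if_neg (Finset.mem_sdiff.mp hp).2]
      have e2 : ∏ p ∈ d, (if p ∈ d then (1:ℝ) else h p / p) ^ mm π p = 1 := by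
        rw [Finset.prod_congr rfl (fun p hp => by rw [if_pos hp, one_pow]),
          Finset.prod_const_one]
      rw [e1, e2]
      have b1 : ∏ p ∈ d, |(1 - h p / p) ^ mm π p - (-(h p / p)) ^ mm π p| ≤ 1 := by
        apply Finset.prod_le_one (fun p _ => abs_nonneg _)
        intro p hp
        have hpP : p ∈ P := by
          obtain ⟨j, _, rfl⟩ := Finset.mem_image.mp (hdT hp); exact hπP j
        exact Bbound (hx0 p hpP) (hx1 p hpP) (hmm1 p (hdT hp))
      have b2 : ∏ p ∈ T \ d, |(-(h p / p)) ^ mm π p| = ∏ p ∈ T \ d, (h p / p) ^ mm π p := by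
        apply Finset.prod_congr rfl
        intro p hp
        have hpP : p ∈ P := by
          obtain ⟨j, _, rfl⟩ := Finset.mem_image.mp ((Finset.mem_sdiff.mp hp).1); exact hπP j
        rw [abs_pow, abs_neg, abs_of_nonneg (hx0 p hpP)]
      rw [mul_comm]
      rw [b2]
      have hA0 : 0 ≤ ∏ p ∈ T \ d, (h p / p) ^ mm π p := by
        apply Finset.prod_nonneg
        intro p hp
        have hpP : p ∈ P := by
          obtain ⟨j, _, rfl⟩ := Finset.mem_image.mp ((Finset.mem_sdiff.mp hp).1); exact hπP j
        exact pow_nonneg (hx0 p hpP) _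
      exact mul_le_mul_of_nonneg_left b1 hA0
    -- assemble per-pi bound
    calc |(∏ j, g j (π j)) *
        ∑ d ∈ T.powerset,
          ((∏ p ∈ d, ((1 - h p / p) ^ mm π p - (-(h p / p)) ^ mm π p)) *
           ∏ p ∈ T \ d, (-(h p / p)) ^ mm π p) * E (∏ p ∈ d, p)|
        ≤ (∏ j, g j (π j)) * ∑ d ∈ T.powerset,
            |((∏ p ∈ d, ((1 - h p / p) ^ mm π p - (-(h p / p)) ^ mm π p)) *
             ∏ p ∈ T \ d, (-(h p / p)) ^ mm π p) * E (∏ p ∈ d, p)| := by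
          rw [abs_mul, abs_of_nonneg hw0]
          exact mul_le_mul_of_nonneg_left (Finset.abs_sum_le_sum_abs _ _) hw0
      _ = ∑ d ∈ T.powerset, (∏ j, g j (π j)) *
            (|(∏ p ∈ d, ((1 - h p / p) ^ mm π p - (-(h p / p)) ^ mm π p)) *
             ∏ p ∈ T \ d, (-(h p / p)) ^ mm π p| * |E (∏ p ∈ d, p)|) := by
          rw [Finset.mul_sum]
          exact Finset.sum_congr rfl fun d _ => by rw [abs_mul]
      _ ≤ ∑ d ∈ T.powerset,
            (∏ j, (g j (π j) * (if π j ∈ d then 1 else h (π j) / (π j)))) * |E (∏ p ∈ d, p)| := by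
          apply Finset.sum_le_sum
          intro d hd
          rw [Finset.prod_mul_distrib, mul_assoc]
          apply mul_le_mul_of_nonneg_left _ hw0
          apply mul_le_mul_of_nonneg_right (key d hd) (abs_nonneg _)
      _ ≤ ∑ d ∈ Dset,
            (∏ j, (g j (π j) * (if π j ∈ d then 1 else h (π j) / (π j)))) * |E (∏ p ∈ d, p)| := by
          apply Finset.sum_le_sum_of_subset_of_nonneg hTpow
          intro d hd _
          apply mul_nonneg _ (abs_nonneg _)
          apply Finset.prod_nonneg
          intro j _
          apply mul_nonneg (hg0 j _ (hπP j))
          by_cases hj : π j ∈ d <;> simp [hj, hx0 _ (hπP j)]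
  -- aggregate over pi
  calc ∑ π ∈ (Fintype.piFinset fun _ : Fin k => P), |(∏ j, g j (π j)) *
        ∑ d ∈ (Finset.image π Finset.univ).powerset,
          ((∏ p ∈ d, ((1 - h p / p) ^ mm π p - (-(h p / p)) ^ mm π p)) *
           ∏ p ∈ (Finset.image π Finset.univ) \ d, (-(h p / p)) ^ mm π p) * E (∏ p ∈ d, p)|
      ≤ ∑ π ∈ (Fintype.piFinset fun _ : Fin k => P), ∑ d ∈ Dset,
          (∏ j, (g j (π j) * (if π j ∈ d then 1 else h (π j) / (π j)))) * |E (∏ p ∈ d, p)| :=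
        Finset.sum_le_sum step1
    _ = ∑ d ∈ Dset, (∑ π ∈ (Fintype.piFinset fun _ : Fin k => P),
          ∏ j, (g j (π j) * (if π j ∈ d then 1 else h (π j) / (π j)))) * |E (∏ p ∈ d, p)| := by
        rw [Finset.sum_comm]
        exact Finset.sum_congr rfl fun d _ => by rw [Finset.sum_mul]
    _ ≤ ∑ d ∈ Dset, (G' * ((k:ℝ) + 1) * (∑ p ∈ P, h p / p)) ^ k * |E (∏ p ∈ d, p)| := by
        apply Finset.sum_le_sum
        intro d hd
        apply mul_le_mul_of_nonneg_right _ (abs_nonneg _)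
        have hswap : ∑ π ∈ (Fintype.piFinset fun _ : Fin k => P),
            ∏ j, (g j (π j) * (if π j ∈ d then 1 else h (π j) / (π j)))
            = ∏ j : Fin k, ∑ p ∈ P, g j p * (if p ∈ d then 1 else h p / p) :=
          (Finset.prod_univ_sum (fun _ : Fin k => P)
            (fun j p => g j p * (if p ∈ d then (1:ℝ) else h p / p))).symm
        rw [hswap]
        have hcard : d.card ≤ k := (Finset.mem_filter.mp hd).2
        calc ∏ j : Fin k, ∑ p ∈ P, g j p * (if p ∈ d then 1 else h p / p)
            ≤ ∏ _j : Fin k, (G' * ((k:ℝ) + 1) * (∑ p ∈ P, h p / p)) := by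
              apply Finset.prod_le_prod
              · intro j _
                apply Finset.sum_nonneg
                intro p hp
                apply mul_nonneg (hg0 j p hp)
                by_cases hpd : p ∈ d <;> simp [hpd, hx0 p hp]
              · intro j _
                exact factor_bound h P hx0 G' hG'1 (g j) (hg0 j) (hgG j) hμ d hcard
          _ = (G' * ((k:ℝ) + 1) * (∑ p ∈ P, h p / p)) ^ k := by
              rw [Finset.prod_const, Finset.card_univ, Fintype.card_fin]
    _ = (G' * ((k:ℝ) + 1)) ^ k * (∑ p ∈ P, h p / p) ^ k *
        ∑ d ∈ P.powerset.filter (fun s => s.card ≤ k), |E (∏ p ∈ d, p)| := by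
        rw [← hDset]
        calc ∑ d ∈ Dset, (G' * ((k:ℝ) + 1) * (∑ p ∈ P, h p / p)) ^ k * |E (∏ p ∈ d, p)|
            = ∑ d ∈ Dset, (G' * ((k:ℝ) + 1)) ^ k * (∑ p ∈ P, h p / p) ^ k * |E (∏ p ∈ d, p)| :=
              Finset.sum_congr rfl fun d _ => by rw [mul_pow]
          _ = _ := (Finset.mul_sum _ _ _).symm


lemma abs_split {ι : Type*} (s : Finset ι) (w M Err : ι → ℝ) (X : ℝ) (hX : 0 ≤ X) :
    |∑ π ∈ s, w π * (X * M π + Err π)|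
    ≤ X * (∑ π ∈ s, |w π * M π|) + ∑ π ∈ s, |w π * Err π| := by
  calc |∑ π ∈ s, w π * (X * M π + Err π)|
      ≤ ∑ π ∈ s, |w π * (X * M π + Err π)| := Finset.abs_sum_le_sum_abs _ _
    _ ≤ ∑ π ∈ s, (X * |w π * M π| + |w π * Err π|) := by
        apply Finset.sum_le_sum
        intro π _
        have : w π * (X * M π + Err π) = X * (w π * M π) + w π * Err π := by ring
        rw [this]
        refine (abs_add_le _ _).trans ?_
        rw [abs_mul, abs_of_nonneg hX]
    _ = X * (∑ π ∈ s, |w π * M π|) + ∑ π ∈ s, |w π * Err π| := by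
        rw [Finset.sum_add_distrib, Finset.mul_sum]

/-- **Proposition 5.6 (odd case)**: for odd `k`,
`∑_{a ∈ A} ∏_j F_{g_j}^P(a) ≪ X 𝔎^{(k−1)/2} + μ^P(1)^k ∑_{d ∈ D_k(P)} |E_d|`. -/
theorem sum_products_F_odd (k : ℕ) (hk : 0 < k) (hko : Odd k) (G : ℝ) (hG : 0 < G) :
    ∃ C : ℝ, ∀ (S : SieveSetup) (P : Finset ℕ), (∀ p ∈ P, p.Prime) →
      1 ≤ muP1 S.h P →
      ∀ g : Fin k → ℕ → ℝ, (∀ j, StronglyAdditive (g j)) →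
      (∀ j, ∀ p : ℕ, p.Prime → 0 ≤ g j p ∧ g j p ≤ G) →
      ∀ K : ℝ,
      (∀ i j : Fin k, |kappaP S.h P (g i) (g j)| ≤ K) →
      (∃ i j : Fin k, K = |kappaP S.h P (g i) (g j)|) →
      1 ≤ K →
      |(S.A.map fun a => ∏ j : Fin k, FP S.h P (g j) a).sum|
      ≤ C * (S.X * K ^ (((k : ℝ) - 1) / 2) + muP1 S.h P ^ k * ∑ d ∈ Dk P k, |S.E d|) := by
  classical
  refine ⟨(k:ℝ) ^ k * (max G 1) ^ k + (max G 1 * ((k:ℝ) + 1)) ^ k, ?_⟩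
  intro S P hP hμ g hgsa hgb K hKb hKex hK1
  set G' : ℝ := max G 1 with hG'
  have hG'1 : (1:ℝ) ≤ G' := le_max_right _ _
  have hx0 : ∀ p ∈ P, 0 ≤ S.h p / p := fun p hp =>
    div_nonneg (S.h_nonneg p (hP p hp).pos) (Nat.cast_nonneg p)
  have hx1 : ∀ p ∈ P, S.h p / p ≤ 1 := fun p hp => by
    rw [div_le_one (by exact_mod_cast (hP p hp).pos)]
    exact S.h_le p (hP p hp).pos
  have hg0 : ∀ j, ∀ p ∈ P, 0 ≤ g j p := fun j p hp => (hgb j p (hP p hp)).1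
  have hgG : ∀ j, ∀ p ∈ P, g j p ≤ G' := fun j p hp =>
    le_trans (hgb j p (hP p hp)).2 (le_max_left _ _)
  -- expansion of the product of F's
  have expand : (S.A.map fun a => ∏ j, FP S.h P (g j) a).sum
      = ∑ π ∈ Fintype.piFinset (fun _ : Fin k => P),
          (∏ j, g j (π j)) * (S.A.map fun a => ∏ j, cfun S.h (π j) a).sum := by
    have pw : (fun a : ℕ => ∏ j, FP S.h P (g j) a)
        = fun a => ∑ π ∈ Fintype.piFinset (fun _ : Fin k => P),
            (∏ j, g j (π j)) * ∏ j, cfun S.h (π j) a := by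
      funext a
      have e1 : ∀ j : Fin k, FP S.h P (g j) a = ∑ p ∈ P, g j p * cfun S.h p a := by
        intro j
        simp only [FP]
        exact Finset.sum_congr rfl fun p hp => by rw [ffun_prime S.h (hP p hp) a]
      calc ∏ j, FP S.h P (g j) a
          = ∏ j : Fin k, ∑ p ∈ P, g j p * cfun S.h p a :=
            Finset.prod_congr rfl fun j _ => e1 j
        _ = ∑ π ∈ Fintype.piFinset (fun _ : Fin k => P),
              ∏ j, (g j (π j) * cfun S.h (π j) a) :=
            Finset.prod_univ_sum (fun _ : Fin k => P) (fun j p => g j p * cfun S.h p a)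
        _ = ∑ π ∈ Fintype.piFinset (fun _ : Fin k => P),
              (∏ j, g j (π j)) * ∏ j, cfun S.h (π j) a :=
            Finset.sum_congr rfl fun π _ => Finset.prod_mul_distrib
    rw [pw, msum_swap]
    exact Finset.sum_congr rfl fun π _ => Multiset.sum_map_mul_left
  have keyid : ∀ π ∈ Fintype.piFinset (fun _ : Fin k => P),
      (S.A.map fun a => ∏ j, cfun S.h (π j) a).sum
      = S.X * (∏ p ∈ Finset.image π Finset.univ, Hterm S.h p (mm π p))
      + ∑ d ∈ (Finset.image π Finset.univ).powerset,
          ((∏ p ∈ d, ((1 - S.h p / p) ^ mm π p - (-(S.h p / p)) ^ mm π p)) *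
           ∏ p ∈ (Finset.image π Finset.univ) \ d, (-(S.h p / p)) ^ mm π p) * S.E (∏ p ∈ d, p) :=
    fun π hπ => key_identity S.A S.X S.h S.E S.h_one S.h_mult S.count_eq P hP π
      (Fintype.mem_piFinset.mp hπ)
  rw [expand, Finset.sum_congr rfl (fun π hπ => by rw [keyid π hπ])]
  have habs := abs_split (Fintype.piFinset fun _ : Fin k => P)
    (fun π => ∏ j, g j (π j))
    (fun π => ∏ p ∈ Finset.image π Finset.univ, Hterm S.h p (mm π p))
    (fun π => ∑ d ∈ (Finset.image π Finset.univ).powerset,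
        ((∏ p ∈ d, ((1 - S.h p / p) ^ mm π p - (-(S.h p / p)) ^ mm π p)) *
         ∏ p ∈ (Finset.image π Finset.univ) \ d, (-(S.h p / p)) ^ mm π p) * S.E (∏ p ∈ d, p))
    S.X S.X_pos.le
  refine habs.trans ?_
  have hμ' : 1 ≤ ∑ p ∈ P, S.h p / p := hμ
  have hmain := main_bound hk hko S.h P hx0 hx1 G' hG'1 g hg0 hgG K hKb hK1
  have herr := err_bound S.h P hP hx0 hx1 G' hG'1 g hg0 hgG hμ' S.E
  have hdk : ∑ d ∈ P.powerset.filter (fun s => s.card ≤ k), |S.E (∏ p ∈ d, p)|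
      = ∑ D ∈ Dk P k, |S.E D| := by
    rw [Dk]
    refine (Finset.sum_image (f := fun D => |S.E D|)
      (g := fun d : Finset ℕ => ∏ p ∈ d, p) ?_).symm
    intro d1 h1 d2 h2 he
    exact prod_primes_inj
      (fun p hp => hP p (Finset.mem_powerset.mp (Finset.mem_filter.mp h1).1 hp))
      (fun p hp => hP p (Finset.mem_powerset.mp (Finset.mem_filter.mp h2).1 hp)) he
  rw [hdk] at herr
  -- numeric assembly
  have hK0 : (0:ℝ) < K := lt_of_lt_of_le one_pos hK1
  have ha0 : 0 ≤ S.X * K ^ (((k:ℝ) - 1) / 2) :=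
    mul_nonneg S.X_pos.le (Real.rpow_pos_of_pos hK0 _).le
  have hb0 : 0 ≤ muP1 S.h P ^ k * ∑ d ∈ Dk P k, |S.E d| :=
    mul_nonneg (pow_nonneg (le_trans zero_le_one hμ) k)
      (Finset.sum_nonneg fun d _ => abs_nonneg _)
  have hc1 : (0:ℝ) ≤ (k:ℝ) ^ k * G' ^ k :=
    mul_nonneg (pow_nonneg (Nat.cast_nonneg k) k)
      (pow_nonneg (le_trans zero_le_one hG'1) k)
  have hc2 : (0:ℝ) ≤ (G' * ((k:ℝ) + 1)) ^ k := by positivity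
  have e1 : S.X * ((k:ℝ) ^ k * (G' ^ k * K ^ (((k:ℝ) - 1) / 2)))
      = ((k:ℝ) ^ k * G' ^ k) * (S.X * K ^ (((k:ℝ) - 1) / 2)) := by ring
  have hXmain : S.X * (∑ π ∈ Fintype.piFinset (fun _ : Fin k => P),
      |(∏ j, g j (π j)) * ∏ p ∈ Finset.image π Finset.univ, Hterm S.h p (mm π p)|)
      ≤ ((k:ℝ) ^ k * G' ^ k) * (S.X * K ^ (((k:ℝ) - 1) / 2)) := by
    rw [← e1]
    exact mul_le_mul_of_nonneg_left hmain S.X_pos.le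
  have herr' : ∑ π ∈ Fintype.piFinset (fun _ : Fin k => P),
      |(∏ j, g j (π j)) * ∑ d ∈ (Finset.image π Finset.univ).powerset,
        ((∏ p ∈ d, ((1 - S.h p / p) ^ mm π p - (-(S.h p / p)) ^ mm π p)) *
         ∏ p ∈ (Finset.image π Finset.univ) \ d, (-(S.h p / p)) ^ mm π p) * S.E (∏ p ∈ d, p)|
      ≤ (G' * ((k:ℝ) + 1)) ^ k * (muP1 S.h P ^ k * ∑ d ∈ Dk P k, |S.E d|) := by
    refine herr.trans ?_
    rw [← mul_assoc]
    rfl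
  calc S.X * (∑ π ∈ Fintype.piFinset (fun _ : Fin k => P),
        |(∏ j, g j (π j)) * ∏ p ∈ Finset.image π Finset.univ, Hterm S.h p (mm π p)|)
      + ∑ π ∈ Fintype.piFinset (fun _ : Fin k => P),
        |(∏ j, g j (π j)) * ∑ d ∈ (Finset.image π Finset.univ).powerset,
          ((∏ p ∈ d, ((1 - S.h p / p) ^ mm π p - (-(S.h p / p)) ^ mm π p)) *
           ∏ p ∈ (Finset.image π Finset.univ) \ d, (-(S.h p / p)) ^ mm π p) * S.E (∏ p ∈ d, p)|
      ≤ ((k:ℝ) ^ k * G' ^ k) * (S.X * K ^ (((k:ℝ) - 1) / 2))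
        + (G' * ((k:ℝ) + 1)) ^ k * (muP1 S.h P ^ k * ∑ d ∈ Dk P k, |S.E d|) :=
        add_le_add hXmain herr'
    _ ≤ ((k:ℝ) ^ k * G' ^ k + (G' * ((k:ℝ) + 1)) ^ k) *
        (S.X * K ^ (((k:ℝ) - 1) / 2) + muP1 S.h P ^ k * ∑ d ∈ Dk P k, |S.E d|) := by
        nlinarith [mul_nonneg hc1 hb0, mul_nonneg hc2 ha0]
end
end
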